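/- Under Assumptions 1 and 2 with θ^0 an interior point of Θ and ξ ∈ (0,1]: for every ε > 0 there exists κ > 0 such that, almost surely, liminf_{N→∞} inf_{θ ∈ Θ : ‖θ − θ^0‖_1 > ε} f_N(θ) − f(θ^0) ≥ κ. -/

import Mathlib

open MeasureTheory ProbabilityTheory Filter Finset
open scoped ENNReal NNReal BigOperators

noncomputable section

namespace GBQL

/-- The probability simplex Δ_C in ℝ^C. -/
def simplex (C : ℕ) : Set (Fin C → ℝ) :=
  {x | (∀ i, 0 ≤ x i) ∧ ∑ i, x i = 1}

/-- A C×C matrix (as a function) is row-stochastic. -/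
def rowStochastic {C : ℕ} (M : Fin C → Fin C → ℝ) : Prop :=
  (∀ i j, 0 ≤ M i j) ∧ ∀ i, ∑ j, M i j = 1

/-- M' x, the transpose of M applied to x : (M'x)_j = Σ_i M_{ij} x_i. -/
def mtv {C : ℕ} (M : Fin C → Fin C → ℝ) (x : Fin C → ℝ) : Fin C → ℝ :=
  fun j => ∑ i, M i j * x i

open scoped Classical in
/-- Kullback–Leibler divergence D_KL(p‖q) = Σ_j p_j log(p_j/q_j) as an element of [0,∞],
with conventions 0·log(0/x) = 0 and p_j log(p_j/0) = ∞ for p_j > 0. -/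
def klDiv {C : ℕ} (p q : Fin C → ℝ) : ℝ≥0∞ :=
  if ∃ j, 0 < p j ∧ q j = 0 then ⊤
  else ENNReal.ofReal (∑ j, if p j = 0 then 0 else p j * Real.log (p j / q j))

/-- Real-valued Kullback–Leibler divergence (agreeing with `klDiv` whenever `q` has
strictly positive entries). -/
def klReal {C : ℕ} (p q : Fin C → ℝ) : ℝ :=
  ∑ j, if p j = 0 then 0 else p j * Real.log (p j / q j)

/-- Completion of a C×(C−1) matrix M̃ to a C×C matrix M with M_{iC} = 1 − Σ_{j<C} M_{ij}. -/
def completeM {c : ℕ} (Mt : Fin (c+1) → Fin c → ℝ) : Fin (c+1) → Fin (c+1) → ℝ :=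
  fun i j => if h : (j : ℕ) < c then Mt i ⟨j, h⟩ else 1 - ∑ k, Mt i k

/-- Completion of p̃ ∈ ℝ^{C−1} to p ∈ ℝ^C with p_C = 1 − Σ_{i<C} p_i. -/
def completeV {c : ℕ} (pt : Fin c → ℝ) : Fin (c+1) → ℝ :=
  fun i => if h : (i : ℕ) < c then pt ⟨i, h⟩ else 1 - ∑ k, pt k

/-- The first C−1 columns of a C×C matrix. -/
def truncM {c : ℕ} (M : Fin (c+1) → Fin (c+1) → ℝ) : Fin (c+1) → Fin c → ℝ :=
  fun i j => M i (Fin.castSucc j)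

/-- The first C−1 coordinates of a vector in ℝ^C. -/
def truncV {c : ℕ} (p : Fin (c+1) → ℝ) : Fin c → ℝ := fun i => p (Fin.castSucc i)

/-- The parameter space: θ = (M̃, p̃). -/
abbrev Param (c : ℕ) := (Fin (c+1) → Fin c → ℝ) × (Fin c → ℝ)

/-- S_d = {x ∈ ℝ^d : x_i ≥ 0, Σ_i x_i ≤ 1}. -/
def Sset (d : ℕ) : Set (Fin d → ℝ) := {x | (∀ i, 0 ≤ x i) ∧ ∑ i, x i ≤ 1}

/-- Θ = (S_{C−1})^C × S_{C−1}. -/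
def Theta (c : ℕ) : Set (Param c) := {θ | (∀ i, θ.1 i ∈ Sset c) ∧ θ.2 ∈ Sset c}

/-- ℓ1 distance on the concatenated coordinates of θ. -/
def l1dist {c : ℕ} (θ θ' : Param c) : ℝ :=
  (∑ i, ∑ j, |θ.1 i j - θ'.1 i j|) + ∑ i, |θ.2 i - θ'.2 i|

/-- The empirical loss f_N(θ), valued in [0,∞]. -/
def fN {c : ℕ} (N n : ℕ) (aU aL bL : ℕ → Fin (c+1) → ℝ) (θ : Param c) : ℝ≥0∞ :=
  ((∑ r ∈ Finset.range N, klDiv (aU r) (mtv (completeM θ.1) (completeV θ.2))) +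
    ∑ r ∈ Finset.range n, klDiv (aL r) (mtv (completeM θ.1) (bL r))) / (N : ℝ≥0∞)

/-- The empirical loss f_N(θ), real-valued version (valid near interior points). -/
def fNreal {c : ℕ} (N n : ℕ) (aU aL bL : ℕ → Fin (c+1) → ℝ) (θ : Param c) : ℝ :=
  ((∑ r ∈ Finset.range N, klReal (aU r) (mtv (completeM θ.1) (completeV θ.2))) +
    ∑ r ∈ Finset.range n, klReal (aL r) (mtv (completeM θ.1) (bL r))) / (N : ℝ)

/-- exp(−x) for x ∈ [0,∞], with exp(−∞) = 0. -/
def expNeg (x : ℝ≥0∞) : ℝ≥0∞ :=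
  if x = ⊤ then 0 else ENNReal.ofReal (Real.exp (-x.toReal))

/-- The extended logarithm [0,∞] → [−∞,∞]. -/
def elog (x : ℝ≥0∞) : EReal :=
  if x = 0 then ⊥ else if x = ⊤ then ⊤ else ((Real.log x.toReal : ℝ) : EReal)

/-- Index set for the coordinates of θ = (M̃, p̃): pairs (i,j) for M̃ entries and i for p̃. -/
abbrev Idx (c : ℕ) := (Fin (c+1) × Fin c) ⊕ Fin c

/-- Coordinates of θ as a vector indexed by `Idx c`. -/
def vecParam {c : ℕ} (θ : Param c) : Idx c → ℝ :=
  Sum.elim (fun ij => θ.1 ij.1 ij.2) (fun i => θ.2 i)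

/-- Standard basis vectors of the parameter space, indexed by `Idx c`. -/
def basisP (c : ℕ) : Idx c → Param c :=
  Sum.elim (fun ij => (fun i j => if i = ij.1 ∧ j = ij.2 then 1 else 0, 0))
    (fun i0 => (0, fun i => if i = i0 then 1 else 0))

/-! ### Basic lemmas -/

section Basic
variable {c : ℕ}

lemma completeV_castSucc {pt : Fin c → ℝ} (j : Fin c) :
    completeV pt (Fin.castSucc j) = pt j := by
  have h : ((Fin.castSucc j : Fin (c+1)) : ℕ) < c := j.isLt
  have he : (⟨((Fin.castSucc j : Fin (c+1)) : ℕ), h⟩ : Fin c) = j := by ext; simp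
  simp only [completeV, dif_pos h, he]

lemma completeV_last {pt : Fin c → ℝ} :
    completeV pt (Fin.last c) = 1 - ∑ k, pt k := by
  simp [completeV]

lemma completeM_castSucc {Mt : Fin (c+1) → Fin c → ℝ} (i : Fin (c+1)) (j : Fin c) :
    completeM Mt i (Fin.castSucc j) = Mt i j := by
  have h : ((Fin.castSucc j : Fin (c+1)) : ℕ) < c := j.isLt
  have he : (⟨((Fin.castSucc j : Fin (c+1)) : ℕ), h⟩ : Fin c) = j := by ext; simp
  simp only [completeM, dif_pos h, he]

lemma completeM_last {Mt : Fin (c+1) → Fin c → ℝ} (i : Fin (c+1)) :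
    completeM Mt i (Fin.last c) = 1 - ∑ k, Mt i k := by
  simp [completeM]

lemma sum_completeV (pt : Fin c → ℝ) : ∑ j, completeV pt j = 1 := by
  rw [Fin.sum_univ_castSucc]
  simp only [completeV_last]
  have : ∀ j : Fin c, completeV pt (Fin.castSucc j) = pt j := completeV_castSucc
  rw [Finset.sum_congr rfl fun j _ => this j]; ring

lemma sum_completeM (Mt : Fin (c+1) → Fin c → ℝ) (i : Fin (c+1)) :
    ∑ j, completeM Mt i j = 1 := by
  rw [Fin.sum_univ_castSucc]
  simp only [completeM_last]
  rw [Finset.sum_congr rfl fun j _ => completeM_castSucc i j]; ring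

lemma completeV_mem_simplex {pt : Fin c → ℝ} (h : pt ∈ Sset c) :
    completeV pt ∈ simplex (c+1) := by
  refine ⟨fun i => ?_, sum_completeV pt⟩
  rcases Fin.eq_castSucc_or_eq_last i with ⟨j, rfl⟩ | rfl
  · rw [completeV_castSucc]; exact h.1 j
  · rw [completeV_last]; linarith [h.2]

lemma completeM_row_mem_simplex {Mt : Fin (c+1) → Fin c → ℝ} (h : ∀ i, Mt i ∈ Sset c)
    (i : Fin (c+1)) : completeM Mt i ∈ simplex (c+1) := by
  refine ⟨fun j => ?_, sum_completeM Mt i⟩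
  rcases Fin.eq_castSucc_or_eq_last j with ⟨j, rfl⟩ | rfl
  · rw [completeM_castSucc]; exact (h i).1 j
  · rw [completeM_last]; linarith [(h i).2]

lemma simplex_le_one {C : ℕ} {x : Fin C → ℝ} (hx : x ∈ simplex C) (i : Fin C) : x i ≤ 1 := by
  have := Finset.single_le_sum (f := x) (fun j _ => hx.1 j) (Finset.mem_univ i)
  rw [hx.2] at this; exact this

lemma mtv_mem_simplex {C : ℕ} {M : Fin C → Fin C → ℝ} {x : Fin C → ℝ}
    (hM : ∀ i, M i ∈ simplex C) (hx : x ∈ simplex C) : mtv M x ∈ simplex C := by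
  constructor
  · intro j
    exact Finset.sum_nonneg fun i _ => mul_nonneg ((hM i).1 j) (hx.1 i)
  · have h1 : ∑ j, mtv M x j = ∑ i, (∑ j, M i j) * x i := by
      simp only [mtv]; rw [Finset.sum_comm]
      exact Finset.sum_congr rfl fun i _ => (Finset.sum_mul _ _ _).symm
    have h2 : ∑ i, (∑ j, M i j) * x i = ∑ i, x i :=
      Finset.sum_congr rfl fun i _ => by rw [(hM i).2, one_mul]
    rw [h1, h2, hx.2]

lemma mtv_ge {C : ℕ} {M : Fin C → Fin C → ℝ} {x : Fin C → ℝ} {m : ℝ}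
    (hM : ∀ i j, m ≤ M i j) (hx : x ∈ simplex C) (j : Fin C) : m ≤ mtv M x j := by
  have : ∑ i, m * x i ≤ ∑ i, M i j * x i :=
    Finset.sum_le_sum fun i _ => mul_le_mul_of_nonneg_right (hM i j) (hx.1 i)
  calc m = m * ∑ i, x i := by rw [hx.2, mul_one]
  _ = ∑ i, m * x i := by rw [Finset.mul_sum]
  _ ≤ _ := this

/-- Gibbs inequality, plain-sum version. -/
lemma gibbs_nonneg {C : ℕ} {p q : Fin C → ℝ} (hp : ∀ j, 0 < p j) (hps : ∑ j, p j = 1)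
    (hq : ∀ j, 0 < q j) (hqs : ∑ j, q j ≤ 1) :
    0 ≤ ∑ j, p j * Real.log (p j / q j) := by
  have key : ∀ j : Fin C, p j - q j ≤ p j * Real.log (p j / q j) := by
    intro j
    have hlog : Real.log (q j / p j) ≤ q j / p j - 1 :=
      Real.log_le_sub_one_of_pos (div_pos (hq j) (hp j))
    have : Real.log (p j / q j) = - Real.log (q j / p j) := by
      have hpj := (hp j).ne'; have hqj := (hq j).ne'
      rw [← Real.log_inv]; congr 1; field_simp
    rw [this]
    have := mul_le_mul_of_nonneg_left hlog (hp j).le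
    have h2 : p j * (q j / p j - 1) = q j - p j := by
      have hpj := (hp j).ne'; field_simp
    nlinarith
  calc (0:ℝ) = 1 - 1 := by ring
  _ ≤ ∑ j, p j - ∑ j, q j := by rw [hps]; linarith
  _ = ∑ j, (p j - q j) := by rw [Finset.sum_sub_distrib]
  _ ≤ _ := Finset.sum_le_sum fun j _ => key j

/-- Strict Gibbs: equality case. -/
lemma gibbs_eq {C : ℕ} {p q : Fin C → ℝ} (hp : ∀ j, 0 < p j) (hps : ∑ j, p j = 1)
    (hq : ∀ j, 0 < q j) (hqs : ∑ j, q j = 1)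
    (h : ∑ j, p j * Real.log (p j / q j) ≤ 0) : p = q := by
  have hterm : ∀ j : Fin C, 0 ≤ q j - p j - p j * Real.log (q j / p j) := by
    intro j
    have hlog : Real.log (q j / p j) ≤ q j / p j - 1 :=
      Real.log_le_sub_one_of_pos (div_pos (hq j) (hp j))
    have := mul_le_mul_of_nonneg_left hlog (hp j).le
    have h2 : p j * (q j / p j - 1) = q j - p j := by
      have hpj := (hp j).ne'; field_simp
    nlinarith
  have hflip : ∀ j : Fin C, p j * Real.log (p j / q j) = - (p j * Real.log (q j / p j)) := by
    intro j
    have : Real.log (p j / q j) = - Real.log (q j / p j) := by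
      have hpj := (hp j).ne'; have hqj := (hq j).ne'
      rw [← Real.log_inv]; congr 1; field_simp
    rw [this]; ring
  have hsum : ∑ j, (q j - p j - p j * Real.log (q j / p j)) = ∑ j, p j * Real.log (p j / q j) := by
    have hpt : ∀ j : Fin C, q j - p j - p j * Real.log (q j / p j)
        = (q j - p j) + p j * Real.log (p j / q j) := fun j => by rw [hflip j]; ring
    rw [Finset.sum_congr rfl fun j _ => hpt j, Finset.sum_add_distrib,
      Finset.sum_sub_distrib, hps, hqs]
    ring
  have hzero : ∑ j, (q j - p j - p j * Real.log (q j / p j)) = 0 :=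
    le_antisymm (by rw [hsum]; exact h) (Finset.sum_nonneg fun j _ => hterm j)
  have heach : ∀ j ∈ Finset.univ, q j - p j - p j * Real.log (q j / p j) = 0 :=
    (Finset.sum_eq_zero_iff_of_nonneg fun j _ => hterm j).1 hzero
  funext j
  have hj := heach j (Finset.mem_univ j)
  by_contra hne
  have hx : q j / p j ≠ 1 := by
    intro h1; apply hne
    rw [div_eq_one_iff_eq (hp j).ne'] at h1; linarith
  have hstrict : Real.log (q j / p j) < q j / p j - 1 :=
    Real.log_lt_sub_one_of_pos (div_pos (hq j) (hp j)) hx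
  have := mul_lt_mul_of_pos_left hstrict (hp j)
  have h2 : p j * (q j / p j - 1) = q j - p j := by
    have hpj := (hp j).ne'; field_simp
  nlinarith

end Basic

section Psi
variable {c : ℕ}

/-- entropy term bounds -/
lemma entropy_term_bounds {a : ℝ} (h0 : 0 ≤ a) (h1 : a ≤ 1) :
    -1 ≤ (if a = 0 then 0 else a * Real.log a) ∧ (if a = 0 then 0 else a * Real.log a) ≤ 0 := by
  by_cases ha : a = 0
  · simp [ha]
  · have hpos : 0 < a := lt_of_le_of_ne h0 (Ne.symm ha)
    rw [if_neg ha]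
    constructor
    · have hinv : Real.log a⁻¹ ≤ a⁻¹ - 1 := Real.log_le_sub_one_of_pos (by positivity)
      rw [Real.log_inv] at hinv
      have : a * (1 - a⁻¹) ≤ a * Real.log a := by
        apply mul_le_mul_of_nonneg_left _ h0; linarith
      have h2 : a * (1 - a⁻¹) = a - 1 := by field_simp
      nlinarith
    · exact mul_nonpos_of_nonneg_of_nonpos h0 (Real.log_nonpos h0 h1)

/-- The lower-envelope function ψ (plays the role of an inf over a ball of the KL loss). -/
def psiU (C : ℕ) (v : Fin C → ℝ) (ρ : ℝ) (a : Fin C → ℝ) : ℝ :=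
  ∑ j, ((if a j = 0 then 0 else a j * Real.log (a j)) - a j * Real.log (v j + ρ))

lemma klReal_split {C : ℕ} (a q : Fin C → ℝ) (hq : ∀ j, 0 < q j) :
    klReal a q = ∑ j, ((if a j = 0 then 0 else a j * Real.log (a j)) - a j * Real.log (q j)) := by
  unfold klReal
  refine Finset.sum_congr rfl fun j _ => ?_
  by_cases ha : a j = 0
  · simp [ha]
  · rw [if_neg ha, if_neg ha, Real.log_div ha (hq j).ne']; ring

/-- ψ is a lower bound for klReal when the reference vector dominates. -/
lemma psiU_le_klReal {C : ℕ} (a q v : Fin C → ℝ) (ha : a ∈ simplex C)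
    {ρ : ℝ} (hρ : 0 < ρ) (hqpos : ∀ j, a j ≠ 0 → 0 < q j) (hqv : ∀ j, q j ≤ v j + ρ)
    (hv : ∀ j, 0 ≤ v j) : psiU C v ρ a ≤ klReal a q := by
  unfold psiU klReal
  refine Finset.sum_le_sum fun j _ => ?_
  by_cases haj : a j = 0
  · simp [haj]
  · have hap : 0 < a j := lt_of_le_of_ne (ha.1 j) (Ne.symm haj)
    have hqj := hqpos j haj
    rw [if_neg haj, if_neg haj, Real.log_div haj hqj.ne']
    have : Real.log (q j) ≤ Real.log (v j + ρ) := Real.log_le_log hqj (hqv j)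
    nlinarith

/-- klDiv dominates ofReal ∘ ψ. -/
lemma ofReal_psiU_le_klDiv {C : ℕ} (a q v : Fin C → ℝ) (ha : a ∈ simplex C)
    {ρ : ℝ} (hρ : 0 < ρ) (hq : ∀ j, 0 ≤ q j) (hqv : ∀ j, q j ≤ v j + ρ)
    (hv : ∀ j, 0 ≤ v j) : ENNReal.ofReal (psiU C v ρ a) ≤ klDiv a q := by
  classical
  unfold klDiv
  split_ifs with h
  · exact le_top
  · push_neg at h
    apply ENNReal.ofReal_le_ofReal
    apply psiU_le_klReal a q v ha hρ _ hqv hv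
    intro j haj
    have hap : 0 < a j := lt_of_le_of_ne (ha.1 j) (Ne.symm haj)
    exact lt_of_le_of_ne (hq j) (Ne.symm (h j hap))

lemma abs_log_le {x m : ℝ} (hm : 0 < m) (hmx : m ≤ x) (hx2 : x ≤ 2) :
    |Real.log x| ≤ |Real.log m| + 1 := by
  have hxpos : 0 < x := lt_of_lt_of_le hm hmx
  have h1 : Real.log x ≤ Real.log 2 := Real.log_le_log hxpos hx2
  have h2 : Real.log m ≤ Real.log x := Real.log_le_log hm hmx
  have hlog2 : Real.log 2 ≤ 1 := by
    have := Real.log_le_sub_one_of_pos (by norm_num : (0:ℝ) < 2); linarith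
  rw [abs_le]
  constructor
  · have : -|Real.log m| ≤ Real.log m := neg_abs_le _
    linarith
  · have : Real.log x ≤ 1 := le_trans h1 hlog2
    have h0 : (0:ℝ) ≤ |Real.log m| := abs_nonneg _
    linarith

lemma psiU_abs_bound {C : ℕ} (v : Fin C → ℝ) {ρ : ℝ} (hρ : 0 < ρ) (hρ1 : ρ ≤ 1)
    (a : Fin C → ℝ) (ha : a ∈ simplex C) (hv : ∀ j, 0 ≤ v j) (hv1 : ∀ j, v j ≤ 1) :
    |psiU C v ρ a| ≤ C * (2 + |Real.log ρ|) := by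
  have hbd : ∀ j : Fin C,
      |(if a j = 0 then 0 else a j * Real.log (a j)) - a j * Real.log (v j + ρ)|
        ≤ 2 + |Real.log ρ| := by
    intro j
    have h1 := entropy_term_bounds (ha.1 j) (simplex_le_one ha j)
    have h2 : |a j * Real.log (v j + ρ)| ≤ |Real.log ρ| + 1 := by
      rw [abs_mul]
      have hlb : |Real.log (v j + ρ)| ≤ |Real.log ρ| + 1 :=
        abs_log_le hρ (by linarith [hv j]) (by linarith [hv1 j])
      have haj : |a j| ≤ 1 := by
        rw [abs_of_nonneg (ha.1 j)]; exact simplex_le_one ha j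
      calc |a j| * |Real.log (v j + ρ)| ≤ 1 * (|Real.log ρ| + 1) := by
            apply mul_le_mul haj hlb (abs_nonneg _) zero_le_one
      _ = |Real.log ρ| + 1 := one_mul _
    have h3 : |(if a j = 0 then 0 else a j * Real.log (a j))| ≤ 1 := by
      rw [abs_le]; exact ⟨h1.1, le_trans h1.2 zero_le_one⟩
    calc |(if a j = 0 then 0 else a j * Real.log (a j)) - a j * Real.log (v j + ρ)|
        ≤ |(if a j = 0 then 0 else a j * Real.log (a j))| + |a j * Real.log (v j + ρ)| :=
          abs_sub _ _
    _ ≤ 1 + (|Real.log ρ| + 1) := add_le_add h3 h2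
    _ = 2 + |Real.log ρ| := by ring
  calc |psiU C v ρ a| ≤ ∑ j : Fin C, |(if a j = 0 then 0 else a j * Real.log (a j))
        - a j * Real.log (v j + ρ)| := Finset.abs_sum_le_sum_abs _ _
  _ ≤ ∑ _j : Fin C, (2 + |Real.log ρ|) := Finset.sum_le_sum fun j _ => hbd j
  _ = C * (2 + |Real.log ρ|) := by rw [Finset.sum_const, Finset.card_univ, Fintype.card_fin]; push_cast; ring

lemma klReal_abs_bound {C : ℕ} (a q : Fin C → ℝ) (ha : a ∈ simplex C) {m : ℝ}
    (hm : 0 < m) (hq : ∀ j, m ≤ q j) (hq1 : ∀ j, q j ≤ 1) :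
    |klReal a q| ≤ C * (1 + |Real.log m|) := by
  have hqpos : ∀ j, 0 < q j := fun j => lt_of_lt_of_le hm (hq j)
  rw [klReal_split a q hqpos]
  have hbd : ∀ j : Fin C,
      |(if a j = 0 then 0 else a j * Real.log (a j)) - a j * Real.log (q j)|
        ≤ 1 + |Real.log m| := by
    intro j
    have h1 := entropy_term_bounds (ha.1 j) (simplex_le_one ha j)
    have h3 : |(if a j = 0 then 0 else a j * Real.log (a j))| ≤ 1 := by
      rw [abs_le]; exact ⟨h1.1, le_trans h1.2 zero_le_one⟩
    have h2 : |a j * Real.log (q j)| ≤ |Real.log m| := by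
      rw [abs_mul]
      have hlq : |Real.log (q j)| ≤ |Real.log m| := by
        have hlog1 : Real.log (q j) ≤ 0 := Real.log_nonpos (hqpos j).le (hq1 j)
        have hlog2 : Real.log m ≤ Real.log (q j) := Real.log_le_log hm (hq j)
        rw [abs_of_nonpos hlog1]
        calc -Real.log (q j) ≤ -Real.log m := by linarith
        _ ≤ |Real.log m| := neg_le_abs _
      have haj : |a j| ≤ 1 := by
        rw [abs_of_nonneg (ha.1 j)]; exact simplex_le_one ha j
      calc |a j| * |Real.log (q j)| ≤ 1 * |Real.log m| :=
            mul_le_mul haj hlq (abs_nonneg _) zero_le_one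
      _ = _ := one_mul _
    calc _ ≤ |(if a j = 0 then 0 else a j * Real.log (a j))| + |a j * Real.log (q j)| :=
          abs_sub _ _
    _ ≤ 1 + |Real.log m| := add_le_add h3 h2
  calc |∑ j, ((if a j = 0 then 0 else a j * Real.log (a j)) - a j * Real.log (q j))|
      ≤ ∑ j : Fin C, |(if a j = 0 then 0 else a j * Real.log (a j)) - a j * Real.log (q j)| :=
        Finset.abs_sum_le_sum_abs _ _
  _ ≤ ∑ _j : Fin C, (1 + |Real.log m|) := Finset.sum_le_sum fun j _ => hbd j
  _ = C * (1 + |Real.log m|) := by rw [Finset.sum_const, Finset.card_univ, Fintype.card_fin]; push_cast; ring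

lemma klReal_nonneg {C : ℕ} (a q : Fin C → ℝ) (ha : a ∈ simplex C)
    (hq : ∀ j, 0 < q j) (hqs : ∑ j, q j ≤ 1) : 0 ≤ klReal a q := by
  unfold klReal
  have key : ∀ j : Fin C, a j - (if a j = 0 then 0 else q j)
      ≤ (if a j = 0 then 0 else a j * Real.log (a j / q j)) := by
    intro j
    by_cases haj : a j = 0
    · simp [haj]
    · have hap : 0 < a j := lt_of_le_of_ne (ha.1 j) (Ne.symm haj)
      rw [if_neg haj, if_neg haj]
      have hlog : Real.log (q j / a j) ≤ q j / a j - 1 :=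
        Real.log_le_sub_one_of_pos (div_pos (hq j) hap)
      have hflip : Real.log (a j / q j) = - Real.log (q j / a j) := by
        have h1 := hap.ne'; have h2 := (hq j).ne'
        rw [← Real.log_inv]; congr 1; field_simp
      rw [hflip]
      have := mul_le_mul_of_nonneg_left hlog hap.le
      have h2 : a j * (q j / a j - 1) = q j - a j := by
        have := hap.ne'; field_simp
      nlinarith
  have h1 : ∑ j, (a j - (if a j = 0 then 0 else q j)) ≥ 0 := by
    rw [Finset.sum_sub_distrib, ha.2]
    have : ∑ j, (if a j = 0 then 0 else q j) ≤ ∑ j, q j :=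
      Finset.sum_le_sum fun j _ => by split_ifs; exacts [(hq j).le, le_refl _]
    linarith
  calc (0:ℝ) ≤ ∑ j, (a j - (if a j = 0 then 0 else q j)) := h1
  _ ≤ _ := Finset.sum_le_sum fun j _ => key j

/-- Measurability of ψ. -/
lemma measurable_psiU {C : ℕ} (v : Fin C → ℝ) (ρ : ℝ) : Measurable (psiU C v ρ) := by
  unfold psiU
  apply Finset.measurable_sum
  intro j _
  apply Measurable.sub
  · have h1 : Measurable fun a : Fin C → ℝ => a j := measurable_pi_apply j
    have : Measurable fun x : ℝ => if x = 0 then (0:ℝ) else x * Real.log x := by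
      apply Measurable.ite (measurableSet_eq) measurable_const
      exact measurable_id.mul Real.measurable_log
    exact this.comp h1
  · exact (measurable_pi_apply j).mul_const _

lemma measurable_klReal_fst {C : ℕ} (q : Fin C → ℝ) : Measurable (fun a => klReal a q) := by
  unfold klReal
  apply Finset.measurable_sum
  intro j _
  have h1 : Measurable fun a : Fin C → ℝ => a j := measurable_pi_apply j
  have h2 : Measurable fun a : Fin C → ℝ => a j / q j := h1.div_const _
  refine Measurable.ite ?_ measurable_const (h1.mul (Real.measurable_log.comp h2))
  exact measurableSet_eq_fun h1 measurable_const

lemma measurable_mtv_snd {C : ℕ} (M : Fin C → Fin C → ℝ) (j : Fin C) :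
    Measurable (fun b : Fin C → ℝ => mtv M b j) := by
  unfold mtv
  apply Finset.measurable_sum
  intro i _
  exact (measurable_pi_apply i).const_mul _

/-- Measurability of the labeled ψ as a function of the pair (a,b). -/
lemma measurable_psiL {C : ℕ} (M : Fin C → Fin C → ℝ) (ρ : ℝ) :
    Measurable (fun p : (Fin C → ℝ) × (Fin C → ℝ) => psiU C (mtv M p.2) ρ p.1) := by
  unfold psiU
  apply Finset.measurable_sum
  intro j _
  apply Measurable.sub
  · have h1 : Measurable fun p : (Fin C → ℝ) × (Fin C → ℝ) => p.1 j :=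
      (measurable_pi_apply j).comp measurable_fst
    have : Measurable fun x : ℝ => if x = 0 then (0:ℝ) else x * Real.log x := by
      apply Measurable.ite (measurableSet_eq) measurable_const
      exact measurable_id.mul Real.measurable_log
    exact this.comp h1
  · have h1 : Measurable fun p : (Fin C → ℝ) × (Fin C → ℝ) => p.1 j :=
      (measurable_pi_apply j).comp measurable_fst
    have h2 : Measurable fun p : (Fin C → ℝ) × (Fin C → ℝ) => mtv M p.2 j :=
      (measurable_mtv_snd M j).comp measurable_snd
    exact h1.mul (Real.measurable_log.comp (h2.add_const ρ))

/-- Measurability of klReal composed with mtv in second argument. -/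
lemma measurable_klReal_pair {C : ℕ} (M : Fin C → Fin C → ℝ) :
    Measurable (fun p : (Fin C → ℝ) × (Fin C → ℝ) => klReal p.1 (mtv M p.2)) := by
  unfold klReal
  apply Finset.measurable_sum
  intro j _
  have h1 : Measurable fun p : (Fin C → ℝ) × (Fin C → ℝ) => p.1 j :=
    (measurable_pi_apply j).comp measurable_fst
  have h2 : Measurable fun p : (Fin C → ℝ) × (Fin C → ℝ) => mtv M p.2 j :=
    (measurable_mtv_snd M j).comp measurable_snd
  refine Measurable.ite ?_ measurable_const (h1.mul (Real.measurable_log.comp (h1.div h2)))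
  exact measurableSet_eq_fun h1 measurable_const

lemma klDiv_eq_ofReal {C : ℕ} (a q : Fin C → ℝ) (hq : ∀ j, 0 < q j) :
    klDiv a q = ENNReal.ofReal (klReal a q) := by
  classical
  unfold klDiv klReal
  rw [if_neg]
  push_neg
  intro j _
  exact (hq j).ne'

end Psi

section Ident

open Matrix in
/-- Injectivity of `mtv M0` when `M0` has nonzero determinant. -/
lemma mtv_injective {C : ℕ} (M0 : Fin C → Fin C → ℝ) (hdet : (Matrix.of M0).det ≠ 0)
    {p p' : Fin C → ℝ} (h : mtv M0 p = mtv M0 p') : p = p' := by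
  have hmv : (Matrix.of M0)ᵀ.mulVec p = (Matrix.of M0)ᵀ.mulVec p' := by
    funext j
    have := congrFun h j
    simpa [Matrix.mulVec, dotProduct, mtv, Matrix.transpose_apply, Matrix.of_apply,
      mul_comm] using this
  have hu : IsUnit ((Matrix.of M0)ᵀ).det := by
    rw [Matrix.det_transpose]; exact Ne.isUnit hdet
  calc p = ((Matrix.of M0)ᵀ⁻¹ * (Matrix.of M0)ᵀ).mulVec p := by
        rw [Matrix.nonsing_inv_mul _ hu, Matrix.one_mulVec]
  _ = (Matrix.of M0)ᵀ⁻¹.mulVec ((Matrix.of M0)ᵀ.mulVec p) := (Matrix.mulVec_mulVec _ _ _).symm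
  _ = (Matrix.of M0)ᵀ⁻¹.mulVec ((Matrix.of M0)ᵀ.mulVec p') := by rw [hmv]
  _ = ((Matrix.of M0)ᵀ⁻¹ * (Matrix.of M0)ᵀ).mulVec p' := Matrix.mulVec_mulVec _ _ _
  _ = p' := by rw [Matrix.nonsing_inv_mul _ hu, Matrix.one_mulVec]

variable {Ωs : Type*} [MeasurableSpace Ωs]

set_option maxHeartbeats 1000000 in
/-- Identifiability: for `θ* ∈ Θ` different from `θ⁰`, some smoothed population divergence
is strictly positive. -/
lemma identifiability (μ : Measure Ωs) [IsProbabilityMeasure μ] {c : ℕ}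
    (b0 : Ωs → Fin (c+1) → ℝ) (hb_meas : Measurable b0)
    (hb_simplex : ∀ ω, b0 ω ∈ simplex (c+1))
    (M0 : Fin (c+1) → Fin (c+1) → ℝ) (p0 : Fin (c+1) → ℝ)
    (hM0 : rowStochastic M0) (hp0 : p0 ∈ simplex (c+1))
    (hM0pos : ∀ i j, 0 < M0 i j)
    (hM0det : (Matrix.of M0).det ≠ 0)
    (hposb : ∀ (i : Fin (c+1)), ∀ ε > (0:ℝ), 0 < μ {ω | 1 - ε ≤ b0 ω i})
    (ξ : ℝ) (hξ0 : 0 < ξ)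
    (θs : Param c) (hθs : θs ∈ Theta c) (hne : θs ≠ (truncM M0, truncV p0)) :
    ∃ ρ : ℝ, 0 < ρ ∧ ρ ≤ 1 ∧
      0 < (∑ j, mtv M0 p0 j *
            Real.log (mtv M0 p0 j / (mtv (completeM θs.1) (completeV θs.2) j + ρ)))
        + ξ * ∫ ω, (∑ j, mtv M0 (b0 ω) j *
            Real.log (mtv M0 (b0 ω) j / (mtv (completeM θs.1) (b0 ω) j + ρ))) ∂μ := by
  classical
  by_contra hcon
  push_neg at hcon
  -- notation
  set Ms : Fin (c+1) → Fin (c+1) → ℝ := completeM θs.1 with hMs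
  set ps : Fin (c+1) → ℝ := completeV θs.2 with hps
  set q0 : Fin (c+1) → ℝ := mtv M0 p0 with hq0def
  set qs : Fin (c+1) → ℝ := mtv Ms ps with hqsdef
  have hM0rows : ∀ i, M0 i ∈ simplex (c+1) := fun i => ⟨hM0.1 i, hM0.2 i⟩
  have hMsrows : ∀ i, Ms i ∈ simplex (c+1) := completeM_row_mem_simplex hθs.1
  have hps_simplex : ps ∈ simplex (c+1) := completeV_mem_simplex hθs.2
  have hq0_simplex : q0 ∈ simplex (c+1) := mtv_mem_simplex hM0rows hp0
  have hqs_simplex : qs ∈ simplex (c+1) := mtv_mem_simplex hMsrows hps_simplex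
  -- minimum entry of M0
  obtain ⟨⟨i0, j0⟩, -, hmin⟩ := Finset.exists_min_image
    (Finset.univ : Finset (Fin (c+1) × Fin (c+1))) (fun p => M0 p.1 p.2) ⟨(0,0), Finset.mem_univ _⟩
  set m : ℝ := M0 i0 j0 with hmdef
  have hm0 : 0 < m := hM0pos i0 j0
  have hmle : ∀ i j, m ≤ M0 i j := fun i j => hmin (i, j) (Finset.mem_univ _)
  have hm1 : m ≤ 1 := le_trans (hmle i0 i0) (simplex_le_one (hM0rows i0) i0)
  have hq0m : ∀ j, m ≤ q0 j := fun j => mtv_ge hmle hp0 j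
  have hq0pos : ∀ j, 0 < q0 j := fun j => lt_of_lt_of_le hm0 (hq0m j)
  have hpbm : ∀ ω j, m ≤ mtv M0 (b0 ω) j := fun ω j => mtv_ge hmle (hb_simplex ω) j
  have hpb_simplex : ∀ ω, mtv M0 (b0 ω) ∈ simplex (c+1) :=
    fun ω => mtv_mem_simplex hM0rows (hb_simplex ω)
  have hqsb_simplex : ∀ ω, mtv Ms (b0 ω) ∈ simplex (c+1) :=
    fun ω => mtv_mem_simplex hMsrows (hb_simplex ω)
  set B : ℝ := Real.log 2 - Real.log m with hBdef
  have hB0 : 0 < B := by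
    have : Real.log m < Real.log 2 :=
      Real.log_lt_log hm0 (lt_of_le_of_lt hm1 one_lt_two)
    simp only [hBdef]; linarith
  -- termwise bounds
  have hterm : ∀ (pj qj ρ : ℝ), 0 < ρ → ρ ≤ 1 → m ≤ pj → pj ≤ 1 → 0 ≤ qj → qj ≤ 1 →
      ((Real.log m - Real.log 2) * pj ≤ pj * Real.log (pj / (qj + ρ)) ∧
        pj * Real.log (pj / (qj + ρ)) ≤ pj * (Real.log pj - Real.log ρ)) := by
    intro pj qj ρ hρ0 hρ1 hmp hp1 hq0' hq1'
    have hppos : 0 < pj := lt_of_lt_of_le hm0 hmp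
    have hqρ : 0 < qj + ρ := by linarith
    have hsplit : Real.log (pj / (qj + ρ)) = Real.log pj - Real.log (qj + ρ) :=
      Real.log_div hppos.ne' hqρ.ne'
    have hub : Real.log (qj + ρ) ≤ Real.log 2 := Real.log_le_log hqρ (by linarith)
    have hlb : Real.log ρ ≤ Real.log (qj + ρ) := Real.log_le_log hρ0 (by linarith)
    have hlogp_ub : Real.log pj ≤ 0 := Real.log_nonpos hppos.le hp1
    have hlogp_lb : Real.log m ≤ Real.log pj := Real.log_le_log hm0 hmp
    constructor
    · rw [hsplit]
      have h1 : Real.log m - Real.log 2 ≤ Real.log pj - Real.log (qj + ρ) := by linarith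
      have h2 : Real.log m - Real.log 2 ≤ 0 := by
        have : Real.log m ≤ Real.log 2 :=
          Real.log_le_log hm0 (by linarith)
        linarith
      nlinarith
    · rw [hsplit]
      have h1 : Real.log pj - Real.log (qj + ρ) ≤ Real.log pj - Real.log ρ := by linarith
      nlinarith
  -- global bounds for the smoothed divergence
  have hDlow : ∀ (p q : Fin (c+1) → ℝ), p ∈ simplex (c+1) → (∀ j, m ≤ p j) → q ∈ simplex (c+1) →
      ∀ ρ : ℝ, 0 < ρ → ρ ≤ 1 → -B ≤ ∑ j, p j * Real.log (p j / (q j + ρ)) := by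
    intro p q hp hpm hq ρ hρ0 hρ1
    have h1 : ∀ j : Fin (c+1), (Real.log m - Real.log 2) * p j ≤ p j * Real.log (p j / (q j + ρ)) :=
      fun j => (hterm (p j) (q j) ρ hρ0 hρ1 (hpm j) (simplex_le_one hp j) (hq.1 j)
        (simplex_le_one hq j)).1
    calc -B = (Real.log m - Real.log 2) * ∑ j, p j := by rw [hp.2, mul_one]; simp only [hBdef]; ring
    _ = ∑ j, (Real.log m - Real.log 2) * p j := by rw [Finset.mul_sum]
    _ ≤ _ := Finset.sum_le_sum fun j _ => h1 j
  have hDhigh : ∀ (p q : Fin (c+1) → ℝ), p ∈ simplex (c+1) → (∀ j, m ≤ p j) → q ∈ simplex (c+1) →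
      ∀ ρ : ℝ, 0 < ρ → ρ ≤ 1 →
        ∑ j, p j * Real.log (p j / (q j + ρ)) ≤ -Real.log ρ := by
    intro p q hp hpm hq ρ hρ0 hρ1
    have h1 : ∀ j : Fin (c+1), p j * Real.log (p j / (q j + ρ)) ≤ p j * (0 - Real.log ρ) := by
      intro j
      refine le_trans (hterm (p j) (q j) ρ hρ0 hρ1 (hpm j) (simplex_le_one hp j) (hq.1 j)
        (simplex_le_one hq j)).2 ?_
      have hppos : 0 < p j := lt_of_lt_of_le hm0 (hpm j)
      have : Real.log (p j) ≤ 0 := Real.log_nonpos hppos.le (simplex_le_one hp j)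
      nlinarith
    calc ∑ j, p j * Real.log (p j / (q j + ρ)) ≤ ∑ j, p j * (0 - Real.log ρ) :=
          Finset.sum_le_sum fun j _ => h1 j
    _ = (∑ j, p j) * (0 - Real.log ρ) := by rw [Finset.sum_mul]
    _ = -Real.log ρ := by rw [hp.2]; ring
  -- blow-up bound when some coordinate of q vanishes
  have hDblow : ∀ (p q : Fin (c+1) → ℝ), p ∈ simplex (c+1) → (∀ j, m ≤ p j) → q ∈ simplex (c+1) →
      ∀ ρ : ℝ, 0 < ρ → ρ ≤ 1 → ∀ jz : Fin (c+1), q jz = 0 →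
        Real.log m - m * Real.log ρ - B ≤ ∑ j, p j * Real.log (p j / (q j + ρ)) := by
    intro p q hp hpm hq ρ hρ0 hρ1 jz hjz
    have hppos : ∀ j, 0 < p j := fun j => lt_of_lt_of_le hm0 (hpm j)
    have hsum : ∑ j, p j * Real.log (p j / (q j + ρ))
        = p jz * Real.log (p jz / (q jz + ρ))
          + ∑ j ∈ Finset.univ.erase jz, p j * Real.log (p j / (q j + ρ)) :=
      (Finset.add_sum_erase _ _ (Finset.mem_univ jz)).symm
    have hrest : (Real.log m - Real.log 2) ≤
        ∑ j ∈ Finset.univ.erase jz, p j * Real.log (p j / (q j + ρ)) := by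
      have h1 : ∀ j ∈ Finset.univ.erase jz,
          (Real.log m - Real.log 2) * p j ≤ p j * Real.log (p j / (q j + ρ)) :=
        fun j _ => (hterm (p j) (q j) ρ hρ0 hρ1 (hpm j) (simplex_le_one hp j) (hq.1 j)
          (simplex_le_one hq j)).1
      have h2 : ∑ j ∈ Finset.univ.erase jz, (Real.log m - Real.log 2) * p j
          = (Real.log m - Real.log 2) * ∑ j ∈ Finset.univ.erase jz, p j := by
        rw [Finset.mul_sum]
      have h3 : ∑ j ∈ Finset.univ.erase jz, p j ≤ 1 := by
        have := Finset.add_sum_erase Finset.univ p (Finset.mem_univ jz)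
        have h4 : ∑ j ∈ Finset.univ.erase jz, p j = 1 - p jz := by rw [← hp.2]; linarith
        rw [h4]; linarith [(hppos jz)]
      have h5 : Real.log m - Real.log 2 ≤ 0 := by
        have : Real.log m ≤ Real.log 2 := Real.log_le_log hm0 (by linarith)
        linarith
      have h6 : (Real.log m - Real.log 2) * 1 ≤ (Real.log m - Real.log 2)
          * ∑ j ∈ Finset.univ.erase jz, p j := by
        apply mul_le_mul_of_nonpos_left h3 h5
      calc Real.log m - Real.log 2 = (Real.log m - Real.log 2) * 1 := by ring
      _ ≤ _ := h6
      _ = _ := h2.symm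
      _ ≤ _ := Finset.sum_le_sum h1
    have hmain : Real.log m - m * Real.log ρ ≤ p jz * Real.log (p jz / (q jz + ρ)) := by
      rw [hjz, zero_add]
      have hpz : 0 < p jz := hppos jz
      have hsplit : Real.log (p jz / ρ) = Real.log (p jz) - Real.log ρ :=
        Real.log_div hpz.ne' hρ0.ne'
      rw [hsplit]
      have h7 : Real.log m ≤ Real.log (p jz) := Real.log_le_log hm0 (hpm jz)
      have h8 : Real.log (p jz) ≤ 0 := Real.log_nonpos hpz.le (simplex_le_one hp jz)
      have h9 : Real.log ρ ≤ 0 := Real.log_nonpos hρ0.le hρ1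
      have h10 : p jz * Real.log (p jz) ≥ Real.log m := by nlinarith [simplex_le_one hp jz]
      have h11 : p jz * (- Real.log ρ) ≥ m * (- Real.log ρ) := by nlinarith [hpm jz]
      nlinarith
    rw [hsum]; simp only [hBdef]; linarith
  -- monotonicity in ρ
  have hDmono : ∀ (p q : Fin (c+1) → ℝ), p ∈ simplex (c+1) → (∀ j, m ≤ p j) → q ∈ simplex (c+1) →
      ∀ ρ ρ' : ℝ, 0 < ρ' → ρ' ≤ ρ →
        ∑ j, p j * Real.log (p j / (q j + ρ)) ≤ ∑ j, p j * Real.log (p j / (q j + ρ')) := by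
    intro p q hp hpm hq ρ ρ' hρ'0 hle
    refine Finset.sum_le_sum fun j _ => ?_
    have hppos : 0 < p j := lt_of_lt_of_le hm0 (hpm j)
    have h1 : 0 < q j + ρ' := by linarith [hq.1 j]
    have h2 : q j + ρ' ≤ q j + ρ := by linarith
    have hlog : Real.log (p j / (q j + ρ)) ≤ Real.log (p j / (q j + ρ')) := by
      apply Real.log_le_log (div_pos hppos (by linarith))
      gcongr
    exact mul_le_mul_of_nonneg_left hlog hppos.le

  -- the sequence of smoothing parameters
  set ρk : ℕ → ℝ := fun k => 1 / ((k:ℝ) + 1) with hρkdef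
  have hρk0 : ∀ k, 0 < ρk k := fun k => by simp only [hρkdef]; positivity
  have hρk1 : ∀ k, ρk k ≤ 1 := by
    intro k; simp only [hρkdef]
    rw [div_le_one (by positivity)]
    have : (0:ℝ) ≤ (k:ℝ) := Nat.cast_nonneg k
    linarith
  have hlogρk : ∀ k, Real.log (ρk k) = - Real.log ((k:ℝ)+1) := by
    intro k; simp only [hρkdef]
    rw [Real.log_div one_ne_zero (by positivity)]
    simp
  set DU : ℝ → ℝ := fun ρ => ∑ j, q0 j * Real.log (q0 j / (qs j + ρ)) with hDUdef
  set DL : ℝ → Ωs → ℝ := fun ρ ω => ∑ j, mtv M0 (b0 ω) j *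
      Real.log (mtv M0 (b0 ω) j / (mtv Ms (b0 ω) j + ρ)) with hDLdef
  have hDL_meas : ∀ ρ : ℝ, Measurable (DL ρ) := by
    intro ρ
    simp only [hDLdef]
    apply Finset.measurable_sum
    intro j _
    have h1 : Measurable fun ω => mtv M0 (b0 ω) j := (measurable_mtv_snd M0 j).comp hb_meas
    have h2 : Measurable fun ω => mtv Ms (b0 ω) j := (measurable_mtv_snd Ms j).comp hb_meas
    exact h1.mul (Real.measurable_log.comp (h1.div (h2.add_const ρ)))
  have hDL_lb : ∀ k ω, -B ≤ DL (ρk k) ω := by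
    intro k ω
    simpa only [hDLdef] using
      hDlow _ _ (hpb_simplex ω) (hpbm ω) (hqsb_simplex ω) _ (hρk0 k) (hρk1 k)
  have hDL_ub : ∀ k ω, DL (ρk k) ω ≤ -Real.log (ρk k) := by
    intro k ω
    simpa only [hDLdef] using
      hDhigh _ _ (hpb_simplex ω) (hpbm ω) (hqsb_simplex ω) _ (hρk0 k) (hρk1 k)
  have hDL_int : ∀ k, Integrable (DL (ρk k)) μ := by
    intro k
    refine Integrable.mono' (integrable_const (B + |Real.log (ρk k)|))
      ((hDL_meas _).aestronglyMeasurable) ?_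
    refine Filter.Eventually.of_forall fun ω => ?_
    rw [Real.norm_eq_abs, abs_le]
    constructor
    · have := abs_nonneg (Real.log (ρk k)); linarith [hDL_lb k ω]
    · have := neg_le_abs (Real.log (ρk k)); linarith [hDL_ub k ω, hB0.le]
  set IL : ℕ → ℝ := fun k => ∫ ω, DL (ρk k) ω ∂μ with hILdef
  have hmain : ∀ k, DU (ρk k) + ξ * IL k ≤ 0 := by
    intro k
    have h := hcon (ρk k) (hρk0 k) (hρk1 k)
    simpa only [hDUdef, hDLdef, hILdef] using h
  have hIL_lb : ∀ k, -B ≤ IL k := by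
    intro k
    have h : ∫ _ω, (-B : ℝ) ∂μ ≤ ∫ ω, DL (ρk k) ω ∂μ :=
      integral_mono (integrable_const _) (hDL_int k) (fun ω => hDL_lb k ω)
    simpa [integral_const, measure_univ] using h
  have hDU_lb : ∀ k, -B ≤ DU (ρk k) := by
    intro k
    simpa only [hDUdef] using hDlow q0 qs hq0_simplex hq0m hqs_simplex _ (hρk0 k) (hρk1 k)
  have hDU_ub : ∀ k, DU (ρk k) ≤ ξ * B := by
    intro k
    have h := hmain k
    have h2 := hIL_lb k
    nlinarith [hξ0]
  -- Step 2 : positivity of qs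
  have hqs_pos : ∀ j, 0 < qs j := by
    intro j
    rcases lt_or_eq_of_le (hqs_simplex.1 j) with h | h
    · exact h
    exfalso
    obtain ⟨k, hk⟩ := exists_nat_gt (Real.exp ((ξ * B + B - Real.log m + 1) / m))
    have hblow := hDblow q0 qs hq0_simplex hq0m hqs_simplex _ (hρk0 k) (hρk1 k) j h.symm
    have hDUk_lb : Real.log m - m * Real.log (ρk k) - B ≤ DU (ρk k) := by
      simpa only [hDUdef] using hblow
    rw [hlogρk k] at hDUk_lb
    have hDUk := hDU_ub k
    have h2 : (ξ * B + B - Real.log m + 1) / m < Real.log ((k:ℝ)+1) := by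
      have hke : Real.exp ((ξ * B + B - Real.log m + 1)/m) < (k:ℝ)+1 :=
        lt_trans hk (lt_add_one _)
      have := Real.log_lt_log (Real.exp_pos _) hke
      rwa [Real.log_exp] at this
    rw [div_lt_iff₀ hm0] at h2
    nlinarith
  -- Step 3 : Fatou argument, a.e. positivity of mtv Ms (b0 ω)
  set g : ℕ → Ωs → ℝ≥0∞ := fun k ω => ENNReal.ofReal (DL (ρk k) ω + B) with hgdef
  have hg_meas : ∀ k, Measurable (g k) := fun k =>
    ENNReal.measurable_ofReal.comp ((hDL_meas _).add_const B)
  have hg_int : ∀ k, ∫⁻ ω, g k ω ∂μ = ENNReal.ofReal (IL k + B) := by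
    intro k
    have hint : Integrable (fun ω => DL (ρk k) ω + B) μ :=
      (hDL_int k).add (integrable_const B)
    have hnn : 0 ≤ᵐ[μ] fun ω => DL (ρk k) ω + B :=
      Filter.Eventually.of_forall fun ω => by
        simp only [Pi.zero_apply]; have := hDL_lb k ω; linarith
    have h := ofReal_integral_eq_lintegral_ofReal hint hnn
    simp only [hgdef]
    rw [← h]
    congr 1
    rw [integral_add (hDL_int k) (integrable_const B), integral_const]
    simp [measure_univ, hILdef]
  have hIL_ub : ∀ k, IL k ≤ B / ξ := by
    intro k
    have h := hmain k
    have h2 := hDU_lb k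
    rw [le_div_iff₀ hξ0]
    nlinarith
  set T : ℝ≥0∞ := ENNReal.ofReal (B / ξ + B) with hTdef
  have hgT : ∀ k, ∫⁻ ω, g k ω ∂μ ≤ T := by
    intro k; rw [hg_int k]
    exact ENNReal.ofReal_le_ofReal (by linarith [hIL_ub k])
  set F : Ωs → ℝ≥0∞ := fun ω => Filter.liminf (fun k => g k ω) Filter.atTop with hFdef
  have hF_meas : Measurable F := Measurable.liminf hg_meas
  have hFT : ∫⁻ ω, F ω ∂μ ≤ T := by
    refine le_trans (lintegral_liminf_le hg_meas) ?_
    refine le_trans (Filter.liminf_le_liminf (Filter.Eventually.of_forall hgT)) ?_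
    simp [Filter.liminf_const]
  have hT_lt_top : T < ⊤ := by simp only [hTdef]; exact ENNReal.ofReal_lt_top
  have hF_lt_top : ∀ᵐ ω ∂μ, F ω < ⊤ :=
    ae_lt_top hF_meas (lt_of_le_of_lt hFT hT_lt_top).ne
  have hae_qsb_pos : ∀ᵐ ω ∂μ, ∀ j, 0 < mtv Ms (b0 ω) j := by
    filter_upwards [hF_lt_top] with ω hω
    intro j
    rcases lt_or_eq_of_le ((hqsb_simplex ω).1 j) with h | h
    · exact h
    exfalso
    have hlow : ∀ k : ℕ, ENNReal.ofReal (Real.log m + m * Real.log ((k:ℝ)+1)) ≤ g k ω := by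
      intro k
      simp only [hgdef]
      apply ENNReal.ofReal_le_ofReal
      have hblow := hDblow _ _ (hpb_simplex ω) (hpbm ω) (hqsb_simplex ω) _ (hρk0 k)
        (hρk1 k) j h.symm
      rw [hlogρk k] at hblow
      have : Real.log m - m * (-Real.log ((k:ℝ)+1)) - B ≤ DL (ρk k) ω := by
        simpa only [hDLdef] using hblow
      nlinarith
    have htop : Filter.Tendsto
        (fun k : ℕ => ENNReal.ofReal (Real.log m + m * Real.log ((k:ℝ)+1)))
        Filter.atTop (nhds ⊤) := by
      apply Filter.Tendsto.comp ENNReal.tendsto_ofReal_atTop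
      have h1 : Filter.Tendsto (fun k : ℕ => ((k:ℝ)+1)) Filter.atTop Filter.atTop :=
        tendsto_atTop_add_const_right _ _ tendsto_natCast_atTop_atTop
      have h2 := Real.tendsto_log_atTop.comp h1
      have h3 := Filter.Tendsto.const_mul_atTop hm0 h2
      exact tendsto_atTop_add_const_left _ _ h3
    have h4 : (⊤:ℝ≥0∞) ≤ F ω := by
      rw [← htop.liminf_eq]
      exact Filter.liminf_le_liminf (Filter.Eventually.of_forall hlow)
    exact hω.ne (top_le_iff.mp h4)
  -- Step 4 : pass to the limit
  have hρk_tendsto : Filter.Tendsto ρk Filter.atTop (nhds 0) := by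
    simp only [hρkdef]; exact tendsto_one_div_add_atTop_nhds_zero_nat
  set DU0 : ℝ := ∑ j, q0 j * Real.log (q0 j / qs j) with hDU0def
  have hDU_tendsto : Filter.Tendsto (fun k => DU (ρk k)) Filter.atTop (nhds DU0) := by
    simp only [hDUdef, hDU0def]
    apply tendsto_finset_sum
    intro j _
    have h1 : Filter.Tendsto (fun k => qs j + ρk k) Filter.atTop (nhds (qs j)) := by
      simpa using (tendsto_const_nhds : Filter.Tendsto (fun _ : ℕ => qs j) Filter.atTop (nhds (qs j))).add hρk_tendsto
    have h2 : Filter.Tendsto (fun k => q0 j / (qs j + ρk k)) Filter.atTop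
        (nhds (q0 j / qs j)) := tendsto_const_nhds.div h1 (hqs_pos j).ne'
    have h3 : Filter.Tendsto (fun k => Real.log (q0 j / (qs j + ρk k))) Filter.atTop
        (nhds (Real.log (q0 j / qs j))) :=
      ((Real.continuousAt_log (div_pos (hq0pos j) (hqs_pos j)).ne').tendsto).comp h2
    exact tendsto_const_nhds.mul h3
  have hIL_mono : Monotone IL := by
    intro k k' hkk
    simp only [hILdef]
    apply integral_mono (hDL_int k) (hDL_int k')
    intro ω
    have hle : ρk k' ≤ ρk k := by
      simp only [hρkdef]
      apply one_div_le_one_div_of_le (by positivity)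
      have : (k:ℝ) ≤ (k':ℝ) := Nat.cast_le.mpr hkk
      linarith
    simp only [hDLdef]
    exact hDmono _ _ (hpb_simplex ω) (hpbm ω) (hqsb_simplex ω) _ _ (hρk0 k') hle
  have hIL_bdd : BddAbove (Set.range IL) := ⟨B/ξ, by rintro x ⟨k, rfl⟩; exact hIL_ub k⟩
  set L : ℝ := ⨆ k, IL k with hLdef
  have hIL_tendsto : Filter.Tendsto IL Filter.atTop (nhds L) :=
    tendsto_atTop_ciSup hIL_mono hIL_bdd
  have hlim : DU0 + ξ * L ≤ 0 :=
    le_of_tendsto (hDU_tendsto.add (hIL_tendsto.const_mul ξ))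
      (Filter.Eventually.of_forall hmain)
  have hDU0_nonneg : 0 ≤ DU0 :=
    gibbs_nonneg hq0pos hq0_simplex.2 hqs_pos (le_of_eq hqs_simplex.2)
  -- a.e. description of F
  have hF_ae : ∀ᵐ ω ∂μ, F ω = ENNReal.ofReal ((∑ j, mtv M0 (b0 ω) j *
      Real.log (mtv M0 (b0 ω) j / mtv Ms (b0 ω) j)) + B) ∧
      0 ≤ ∑ j, mtv M0 (b0 ω) j * Real.log (mtv M0 (b0 ω) j / mtv Ms (b0 ω) j) := by
    filter_upwards [hae_qsb_pos] with ω hω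
    have hpbpos : ∀ j, 0 < mtv M0 (b0 ω) j := fun j => lt_of_lt_of_le hm0 (hpbm ω j)
    have hDL0_nonneg : 0 ≤ ∑ j, mtv M0 (b0 ω) j *
        Real.log (mtv M0 (b0 ω) j / mtv Ms (b0 ω) j) :=
      gibbs_nonneg hpbpos (hpb_simplex ω).2 hω (le_of_eq (hqsb_simplex ω).2)
    refine ⟨?_, hDL0_nonneg⟩
    have hinner : Filter.Tendsto (fun k => DL (ρk k) ω + B) Filter.atTop
        (nhds ((∑ j, mtv M0 (b0 ω) j *
          Real.log (mtv M0 (b0 ω) j / mtv Ms (b0 ω) j)) + B)) := by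
      apply Filter.Tendsto.add_const
      simp only [hDLdef]
      apply tendsto_finset_sum
      intro j _
      have h1 : Filter.Tendsto (fun k => mtv Ms (b0 ω) j + ρk k) Filter.atTop
          (nhds (mtv Ms (b0 ω) j)) := by
        simpa using (tendsto_const_nhds : Filter.Tendsto (fun _ : ℕ => mtv Ms (b0 ω) j) Filter.atTop (nhds (mtv Ms (b0 ω) j))).add hρk_tendsto
      have h2 : Filter.Tendsto (fun k => mtv M0 (b0 ω) j / (mtv Ms (b0 ω) j + ρk k))
          Filter.atTop (nhds (mtv M0 (b0 ω) j / mtv Ms (b0 ω) j)) :=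
        tendsto_const_nhds.div h1 (hω j).ne'
      have h3 := ((Real.continuousAt_log
        (div_pos (hpbpos j) (hω j)).ne').tendsto).comp h2
      exact tendsto_const_nhds.mul h3
    have htend : Filter.Tendsto (fun k => g k ω) Filter.atTop
        (nhds (ENNReal.ofReal ((∑ j, mtv M0 (b0 ω) j *
          Real.log (mtv M0 (b0 ω) j / mtv Ms (b0 ω) j)) + B))) := by
      simp only [hgdef]
      exact (ENNReal.continuous_ofReal.tendsto _).comp hinner
    exact htend.liminf_eq
  have haeFgeB : ∀ᵐ ω ∂μ, ENNReal.ofReal B ≤ F ω := by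
    filter_upwards [hF_ae] with ω hω
    rw [hω.1]; exact ENNReal.ofReal_le_ofReal (by linarith [hω.2])
  set J : ℝ≥0∞ := ∫⁻ ω, F ω ∂μ with hJdef
  have hJ_ge : ENNReal.ofReal B ≤ J := by
    have h := lintegral_mono_ae haeFgeB
    rwa [lintegral_const, measure_univ, mul_one] at h
  have hJ_le : J ≤ ENNReal.ofReal (L + B) := by
    refine le_trans (lintegral_liminf_le hg_meas) ?_
    have h1 : ∀ k, ∫⁻ ω, g k ω ∂μ ≤ ENNReal.ofReal (L + B) := by
      intro k
      rw [hg_int k]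
      apply ENNReal.ofReal_le_ofReal
      have : IL k ≤ L := le_ciSup hIL_bdd k
      linarith
    refine le_trans (Filter.liminf_le_liminf (Filter.Eventually.of_forall h1)) ?_
    simp [Filter.liminf_const]
  have hJ_ne_top : J ≠ ⊤ := (lt_of_le_of_lt hFT hT_lt_top).ne
  have hL_nonneg : 0 ≤ L := by
    by_contra hneg
    push_neg at hneg
    have h1 : ENNReal.ofReal (L + B) < ENNReal.ofReal B :=
      (ENNReal.ofReal_lt_ofReal_iff hB0).mpr (by linarith)
    exact absurd (lt_of_le_of_lt (le_trans hJ_ge hJ_le) h1) (lt_irrefl _)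
  have hDU0_zero : DU0 ≤ 0 := by nlinarith
  have hq0_eq_qs : q0 = qs := by
    apply gibbs_eq hq0pos hq0_simplex.2 hqs_pos hqs_simplex.2
    simpa only [hDU0def] using hDU0_zero
  have hL_zero : L = 0 := le_antisymm (by nlinarith) hL_nonneg
  have hJ_eq : J = ENNReal.ofReal B := by
    refine le_antisymm ?_ hJ_ge
    rw [hL_zero, zero_add] at hJ_le; exact hJ_le
  have hsub : ∫⁻ ω, (F ω - ENNReal.ofReal B) ∂μ = 0 := by
    rw [lintegral_sub measurable_const
      (by rw [lintegral_const, measure_univ, mul_one]; exact ENNReal.ofReal_ne_top) haeFgeB]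
    rw [lintegral_const, measure_univ, mul_one, ← hJdef, hJ_eq, tsub_self]
  have hFaeB : ∀ᵐ ω ∂μ, F ω = ENNReal.ofReal B := by
    have h0 := (lintegral_eq_zero_iff (hF_meas.sub measurable_const)).1 hsub
    filter_upwards [h0, haeFgeB] with ω h1 h2
    have h1' : F ω - ENNReal.ofReal B = 0 := h1
    exact le_antisymm (tsub_eq_zero_iff_le.mp h1') h2
  have hae_eq : ∀ᵐ ω ∂μ, mtv M0 (b0 ω) = mtv Ms (b0 ω) := by
    filter_upwards [hFaeB, hF_ae, hae_qsb_pos] with ω h1 h2 hpos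
    have h3 : ENNReal.ofReal ((∑ j, mtv M0 (b0 ω) j *
        Real.log (mtv M0 (b0 ω) j / mtv Ms (b0 ω) j)) + B) = ENNReal.ofReal B := by
      rw [← h2.1]; exact h1
    have h4 : (∑ j, mtv M0 (b0 ω) j *
        Real.log (mtv M0 (b0 ω) j / mtv Ms (b0 ω) j)) ≤ 0 := by
      by_contra hgt
      push_neg at hgt
      have h5 : ENNReal.ofReal B < ENNReal.ofReal ((∑ j, mtv M0 (b0 ω) j *
          Real.log (mtv M0 (b0 ω) j / mtv Ms (b0 ω) j)) + B) :=
        (ENNReal.ofReal_lt_ofReal_iff (by linarith)).mpr (by linarith)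
      rw [h3] at h5
      exact lt_irrefl _ h5
    exact gibbs_eq (fun j => lt_of_lt_of_le hm0 (hpbm ω j)) (hpb_simplex ω).2 hpos
      (hqsb_simplex ω).2 h4
  -- Step 5 : Ms = M0 via the vertex argument
  have hMs_eq : Ms = M0 := by
    funext i j
    have hkey : ∀ k : ℕ, |Ms i j - M0 i j| ≤ 2 * (1/((k:ℝ)+1)) := by
      intro k
      have hpos := hposb i (1/((k:ℝ)+1)) (by positivity)
      have hnull : μ {ω | mtv M0 (b0 ω) = mtv Ms (b0 ω)}ᶜ = 0 := by
        have h := MeasureTheory.ae_iff.mp hae_eq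
        simpa [Set.compl_setOf] using h
      have hne0 : μ ({ω | 1 - 1/((k:ℝ)+1) ≤ b0 ω i}
          ∩ {ω | mtv M0 (b0 ω) = mtv Ms (b0 ω)}) ≠ 0 := by
        rw [measure_inter_conull hnull]
        exact hpos.ne'
      obtain ⟨ω, hω1, hω2⟩ := nonempty_of_measure_ne_zero hne0
      have hb := hb_simplex ω
      have hbi : 1 - 1/((k:ℝ)+1) ≤ b0 ω i := hω1
      have hsumeq : ∑ l, (Ms l j - M0 l j) * b0 ω l = 0 := by
        have heqj : mtv Ms (b0 ω) j - mtv M0 (b0 ω) j = 0 := by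
          rw [congrFun hω2 j]; ring
        have h6 : ∑ l, Ms l j * b0 ω l - ∑ l, M0 l j * b0 ω l = 0 := by
          simpa only [mtv] using heqj
        rw [← Finset.sum_sub_distrib] at h6
        simpa [sub_mul] using h6
      have hd_le : ∀ l, |Ms l j - M0 l j| ≤ 1 := by
        intro l
        have hu1 : 0 ≤ Ms l j := (hMsrows l).1 j
        have hu2 : Ms l j ≤ 1 := simplex_le_one (hMsrows l) j
        have hu3 : 0 ≤ M0 l j := hM0.1 l j
        have hu4 : M0 l j ≤ 1 := simplex_le_one (hM0rows l) j
        rw [abs_le]; constructor <;> linarith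
      have hsum_erase : ∑ l ∈ Finset.univ.erase i, b0 ω l = 1 - b0 ω i := by
        have h := Finset.add_sum_erase Finset.univ (b0 ω) (Finset.mem_univ i)
        rw [hb.2] at h; linarith
      have herase : |Ms i j - M0 i j| * b0 ω i ≤ 1 - b0 ω i := by
        have h5 := Finset.add_sum_erase Finset.univ
          (fun l => (Ms l j - M0 l j) * b0 ω l) (Finset.mem_univ i)
        rw [hsumeq] at h5
        have h5b : (Ms i j - M0 i j) * b0 ω i
            + ∑ l ∈ Finset.univ.erase i, (Ms l j - M0 l j) * b0 ω l = 0 := by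
          simpa using h5
        have h5' : (Ms i j - M0 i j) * b0 ω i
            = - ∑ l ∈ Finset.univ.erase i, (Ms l j - M0 l j) * b0 ω l := by linarith
        calc |Ms i j - M0 i j| * b0 ω i = |(Ms i j - M0 i j) * b0 ω i| := by
              rw [abs_mul, abs_of_nonneg (hb.1 i)]
        _ = |∑ l ∈ Finset.univ.erase i, (Ms l j - M0 l j) * b0 ω l| := by
              rw [h5', abs_neg]
        _ ≤ ∑ l ∈ Finset.univ.erase i, |(Ms l j - M0 l j) * b0 ω l| :=
              Finset.abs_sum_le_sum_abs _ _
        _ ≤ ∑ l ∈ Finset.univ.erase i, b0 ω l := by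
              refine Finset.sum_le_sum fun l _ => ?_
              rw [abs_mul, abs_of_nonneg (hb.1 l)]
              nlinarith [hd_le l, hb.1 l, abs_nonneg (Ms l j - M0 l j)]
        _ = 1 - b0 ω i := hsum_erase
      have hble : b0 ω i ≤ 1 := simplex_le_one hb i
      have h1k : 1 - b0 ω i ≤ 1/((k:ℝ)+1) := by linarith
      have h7 : |Ms i j - M0 i j| * (1 - b0 ω i) ≤ 1 - b0 ω i := by
        nlinarith [hd_le i]
      have hid : |Ms i j - M0 i j| * b0 ω i + |Ms i j - M0 i j| * (1 - b0 ω i)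
          = |Ms i j - M0 i j| := by ring
      linarith
    by_contra hne2
    have habs : 0 < |Ms i j - M0 i j| := abs_pos.mpr (sub_ne_zero.mpr hne2)
    obtain ⟨k, hk⟩ := exists_nat_gt (2 / |Ms i j - M0 i j|)
    have hkk := hkey k
    have h2 : 2 / |Ms i j - M0 i j| < (k:ℝ) + 1 := lt_trans hk (lt_add_one _)
    rw [div_lt_iff₀ habs] at h2
    have h3 : 2 * (1/((k:ℝ)+1)) < |Ms i j - M0 i j| := by
      rw [mul_one_div, div_lt_iff₀ (by positivity)]
      nlinarith
    linarith
  -- conclude θs = θ0, contradiction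
  have hq_eq : mtv M0 ps = mtv M0 p0 := by
    have h := hq0_eq_qs
    simp only [hq0def, hqsdef, hMs_eq] at h
    exact h.symm
  have hps_eq : ps = p0 := mtv_injective M0 hM0det hq_eq
  apply hne
  have h1 : θs.1 = truncM M0 := by
    funext i j
    calc θs.1 i j = Ms i (Fin.castSucc j) := (completeM_castSucc i j).symm
    _ = M0 i (Fin.castSucc j) := by rw [hMs_eq]
    _ = truncM M0 i j := rfl
  have h2 : θs.2 = truncV p0 := by
    funext i
    calc θs.2 i = ps (Fin.castSucc i) := (completeV_castSucc i).symm
    _ = p0 (Fin.castSucc i) := by rw [hps_eq]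
    _ = truncV p0 i := rfl
  exact Prod.ext h1 h2


end Ident

section Helpers

variable {Ωs : Type*} [MeasurableSpace Ωs]

/-- SLLN for uniformly bounded random variables. -/
lemma slln_bounded (μ : Measure Ωs) [IsProbabilityMeasure μ]
    (X : ℕ → Ωs → ℝ) (hmeas : ∀ r, AEStronglyMeasurable (X r) μ) (B : ℝ)
    (hbd : ∀ r ω, |X r ω| ≤ B)
    (hindep : Pairwise (Function.onFun (fun f g => IndepFun f g μ) X))
    (hident : ∀ r, IdentDistrib (X r) (X 0) μ μ) :
    ∀ᵐ ω ∂μ, Filter.Tendsto (fun N : ℕ => (∑ r ∈ Finset.range N, X r ω) / N)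
      Filter.atTop (nhds (∫ ω', X 0 ω' ∂μ)) := by
  apply ProbabilityTheory.strong_law_ae_real
  · exact Integrable.mono' (integrable_const B) (hmeas 0)
      (Filter.Eventually.of_forall fun ω => by rw [Real.norm_eq_abs]; exact hbd 0 ω)
  · exact hindep
  · exact hident

/-- Transfer of expectations through the conditional mean hypothesis. -/
lemma condexp_transfer (μ : Measure Ωs) [IsProbabilityMeasure μ]
    {c : ℕ} (a0 b0 : Ωs → Fin (c+1) → ℝ)
    (ha_meas : Measurable a0) (hb_meas : Measurable b0)
    (ha_bd : ∀ ω, a0 ω ∈ simplex (c+1))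
    (M0 : Fin (c+1) → Fin (c+1) → ℝ)
    (j : Fin (c+1))
    (hcond : μ[(fun ω => a0 ω j) | MeasurableSpace.comap b0 inferInstance]
      =ᵐ[μ] fun ω => mtv M0 (b0 ω) j)
    (H : (Fin (c+1) → ℝ) → ℝ) (hH : Measurable H) (BH : ℝ)
    (hbd : ∀ ω, |H (b0 ω)| ≤ BH) :
    ∫ ω, H (b0 ω) * a0 ω j ∂μ = ∫ ω, H (b0 ω) * mtv M0 (b0 ω) j ∂μ := by
  have hm' : MeasurableSpace.comap b0 inferInstance ≤ ‹MeasurableSpace Ωs› :=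
    hb_meas.comap_le
  haveI : SigmaFinite (μ.trim hm') := by
    have : IsFiniteMeasure (μ.trim hm') := by
      constructor
      rw [MeasureTheory.trim_measurableSet_eq hm' MeasurableSet.univ]
      exact measure_lt_top μ _
    infer_instance
  have hf_meas : StronglyMeasurable[MeasurableSpace.comap b0 inferInstance]
      (fun ω => H (b0 ω)) := by
    apply Measurable.stronglyMeasurable
    exact hH.comp (measurable_iff_comap_le.mpr le_rfl)
  have hg_int : Integrable (fun ω => a0 ω j) μ := by
    refine Integrable.mono' (integrable_const 1)
      (((measurable_pi_apply j).comp ha_meas).aestronglyMeasurable)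
      (Filter.Eventually.of_forall fun ω => ?_)
    rw [Real.norm_eq_abs, abs_of_nonneg ((ha_bd ω).1 j)]
    exact simplex_le_one (ha_bd ω) j
  have hpull := condExp_stronglyMeasurable_mul_of_bound hm' hf_meas hg_int BH
    (Filter.Eventually.of_forall fun ω => by rw [Real.norm_eq_abs]; exact hbd ω)
  have h1 : ∫ ω, ((fun ω => H (b0 ω)) * (fun ω => a0 ω j)) ω ∂μ
      = ∫ ω, (μ[(fun ω => H (b0 ω)) * (fun ω => a0 ω j)
          | MeasurableSpace.comap b0 inferInstance]) ω ∂μ :=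
    (integral_condExp hm').symm
  calc ∫ ω, H (b0 ω) * a0 ω j ∂μ
      = ∫ ω, ((fun ω => H (b0 ω)) * (fun ω => a0 ω j)) ω ∂μ := rfl
  _ = ∫ ω, (μ[(fun ω => H (b0 ω)) * (fun ω => a0 ω j)
        | MeasurableSpace.comap b0 inferInstance]) ω ∂μ := h1
  _ = ∫ ω, ((fun ω => H (b0 ω)) * μ[(fun ω => a0 ω j)
        | MeasurableSpace.comap b0 inferInstance]) ω ∂μ := integral_congr_ae hpull
  _ = ∫ ω, H (b0 ω) * mtv M0 (b0 ω) j ∂μ := by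
      apply integral_congr_ae
      filter_upwards [hcond] with ω hω
      simp only [Pi.mul_apply]
      rw [hω]

/-- ofReal is subadditive over finite sums. -/
lemma ofReal_sum_le {ι : Type*} (s : Finset ι) (f : ι → ℝ) :
    ENNReal.ofReal (∑ i ∈ s, f i) ≤ ∑ i ∈ s, ENNReal.ofReal (f i) := by
  classical
  induction s using Finset.induction_on with
  | empty => simp
  | insert a s hnotmem ih =>
    rw [Finset.sum_insert hnotmem, Finset.sum_insert hnotmem]
    exact le_trans ENNReal.ofReal_add_le (add_le_add le_rfl ih)

/-- Decomposition of ψ against a positive reference vector. -/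
lemma psiU_decomp {C : ℕ} (v q0 : Fin C → ℝ) (ρ : ℝ) (hq0 : ∀ j, 0 < q0 j)
    (a : Fin C → ℝ) :
    psiU C v ρ a = klReal a q0 + ∑ j, a j * (Real.log (q0 j) - Real.log (v j + ρ)) := by
  rw [klReal_split a q0 hq0]
  unfold psiU
  rw [← Finset.sum_add_distrib]
  refine Finset.sum_congr rfl fun j _ => ?_
  ring

end Helpers

section Geometry
variable {c : ℕ}

lemma dist_coords (θ x : Param c) {δ : ℝ} (hd : dist θ x ≤ δ) :
    (∀ i j, |θ.1 i j - x.1 i j| ≤ δ) ∧ (∀ i, |θ.2 i - x.2 i| ≤ δ) := by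
  have h1 : dist θ.1 x.1 ≤ δ := le_trans (by rw [Prod.dist_eq]; exact le_max_left _ _) hd
  have h2 : dist θ.2 x.2 ≤ δ := le_trans (by rw [Prod.dist_eq]; exact le_max_right _ _) hd
  constructor
  · intro i j
    have h3 : dist (θ.1 i) (x.1 i) ≤ δ := le_trans (dist_le_pi_dist _ _ i) h1
    have h4 : dist (θ.1 i j) (x.1 i j) ≤ δ := le_trans (dist_le_pi_dist _ _ j) h3
    rwa [Real.dist_eq] at h4
  · intro i
    have h4 : dist (θ.2 i) (x.2 i) ≤ δ := le_trans (dist_le_pi_dist _ _ i) h2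
    rwa [Real.dist_eq] at h4

lemma completeM_close {Mt Mt' : Fin (c+1) → Fin c → ℝ} {δ : ℝ} (hδ : 0 ≤ δ)
    (h : ∀ i j, |Mt i j - Mt' i j| ≤ δ) (i : Fin (c+1)) (j : Fin (c+1)) :
    |completeM Mt i j - completeM Mt' i j| ≤ c * δ := by
  rcases Fin.eq_castSucc_or_eq_last j with ⟨j', rfl⟩ | rfl
  · rw [completeM_castSucc, completeM_castSucc]
    have hc1 : (1:ℝ) ≤ c := by exact_mod_cast j'.pos
    calc |Mt i j' - Mt' i j'| ≤ δ := h i j'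
    _ = 1 * δ := (one_mul δ).symm
    _ ≤ c * δ := mul_le_mul_of_nonneg_right hc1 hδ
  · rw [completeM_last, completeM_last]
    have : (1 - ∑ k, Mt i k) - (1 - ∑ k, Mt' i k) = ∑ k, (Mt' i k - Mt i k) := by
      rw [Finset.sum_sub_distrib]; ring
    rw [this]
    calc |∑ k, (Mt' i k - Mt i k)| ≤ ∑ k, |Mt' i k - Mt i k| :=
          Finset.abs_sum_le_sum_abs _ _
    _ ≤ ∑ _k : Fin c, δ := Finset.sum_le_sum fun k _ => by rw [abs_sub_comm]; exact h i k
    _ = c * δ := by rw [Finset.sum_const, Finset.card_univ, Fintype.card_fin, nsmul_eq_mul]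

lemma completeV_close {pt pt' : Fin c → ℝ} {δ : ℝ} (hδ : 0 ≤ δ)
    (h : ∀ i, |pt i - pt' i| ≤ δ) (i : Fin (c+1)) :
    |completeV pt i - completeV pt' i| ≤ c * δ := by
  rcases Fin.eq_castSucc_or_eq_last i with ⟨j', rfl⟩ | rfl
  · rw [completeV_castSucc, completeV_castSucc]
    have hc1 : (1:ℝ) ≤ c := by exact_mod_cast j'.pos
    calc |pt j' - pt' j'| ≤ δ := h j'
    _ = 1 * δ := (one_mul δ).symm
    _ ≤ c * δ := mul_le_mul_of_nonneg_right hc1 hδ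
  · rw [completeV_last, completeV_last]
    have : (1 - ∑ k, pt k) - (1 - ∑ k, pt' k) = ∑ k, (pt' k - pt k) := by
      rw [Finset.sum_sub_distrib]; ring
    rw [this]
    calc |∑ k, (pt' k - pt k)| ≤ ∑ k, |pt' k - pt k| := Finset.abs_sum_le_sum_abs _ _
    _ ≤ ∑ _k : Fin c, δ := Finset.sum_le_sum fun k _ => by rw [abs_sub_comm]; exact h k
    _ = c * δ := by rw [Finset.sum_const, Finset.card_univ, Fintype.card_fin, nsmul_eq_mul]

lemma mtv_close {C : ℕ} {M M' : Fin C → Fin C → ℝ} {b : Fin C → ℝ} (hb : b ∈ simplex C)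
    {η : ℝ} (h : ∀ i j, |M i j - M' i j| ≤ η) (j : Fin C) :
    |mtv M b j - mtv M' b j| ≤ η := by
  unfold mtv
  rw [← Finset.sum_sub_distrib]
  calc |∑ i, (M i j * b i - M' i j * b i)| ≤ ∑ i, |M i j * b i - M' i j * b i| :=
        Finset.abs_sum_le_sum_abs _ _
  _ = ∑ i, |M i j - M' i j| * b i := by
      refine Finset.sum_congr rfl fun i _ => ?_
      rw [← sub_mul, abs_mul, abs_of_nonneg (hb.1 i)]
  _ ≤ ∑ i, η * b i := Finset.sum_le_sum fun i _ =>
      mul_le_mul_of_nonneg_right (h i j) (hb.1 i)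
  _ = η := by rw [← Finset.mul_sum, hb.2, mul_one]

lemma q_close {θ x : Param c} (hθ : θ ∈ Theta c) (hx : x ∈ Theta c) {E : ℝ} (hE : 0 ≤ E)
    (h1 : ∀ i j, |completeM θ.1 i j - completeM x.1 i j| ≤ E)
    (h2 : ∀ i, |completeV θ.2 i - completeV x.2 i| ≤ E) (j : Fin (c+1)) :
    |mtv (completeM θ.1) (completeV θ.2) j - mtv (completeM x.1) (completeV x.2) j|
      ≤ ((c:ℝ) + 2) * E := by
  have hp := completeV_mem_simplex hθ.2
  have hMx := completeM_row_mem_simplex hx.1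
  unfold mtv
  rw [← Finset.sum_sub_distrib]
  have key : ∀ i : Fin (c+1),
      |completeM θ.1 i j * completeV θ.2 i - completeM x.1 i j * completeV x.2 i|
        ≤ E * completeV θ.2 i + E := by
    intro i
    have hsplit : completeM θ.1 i j * completeV θ.2 i - completeM x.1 i j * completeV x.2 i
        = (completeM θ.1 i j - completeM x.1 i j) * completeV θ.2 i
          + completeM x.1 i j * (completeV θ.2 i - completeV x.2 i) := by ring
    rw [hsplit]
    calc _ ≤ |(completeM θ.1 i j - completeM x.1 i j) * completeV θ.2 i|
          + |completeM x.1 i j * (completeV θ.2 i - completeV x.2 i)| := abs_add_le _ _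
    _ ≤ E * completeV θ.2 i + E := by
        apply add_le_add
        · rw [abs_mul, abs_of_nonneg (hp.1 i)]
          exact mul_le_mul_of_nonneg_right (h1 i j) (hp.1 i)
        · rw [abs_mul]
          have hb1 : |completeM x.1 i j| ≤ 1 := by
            rw [abs_of_nonneg ((hMx i).1 j)]; exact simplex_le_one (hMx i) j
          calc |completeM x.1 i j| * |completeV θ.2 i - completeV x.2 i| ≤ 1 * E :=
                mul_le_mul hb1 (h2 i) (abs_nonneg _) zero_le_one
          _ = E := one_mul E
  calc |∑ i, (completeM θ.1 i j * completeV θ.2 i - completeM x.1 i j * completeV x.2 i)|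
      ≤ ∑ i, |completeM θ.1 i j * completeV θ.2 i - completeM x.1 i j * completeV x.2 i| :=
        Finset.abs_sum_le_sum_abs _ _
  _ ≤ ∑ i, (E * completeV θ.2 i + E) := Finset.sum_le_sum fun i _ => key i
  _ = E * 1 + (c+1) * E := by
      rw [Finset.sum_add_distrib, ← Finset.mul_sum, hp.2, Finset.sum_const,
        Finset.card_univ, Fintype.card_fin, nsmul_eq_mul]
      push_cast; ring
  _ = ((c:ℝ) + 2) * E := by ring

lemma isClosed_Sset (d : ℕ) : IsClosed (Sset d) := by
  have h1 : IsClosed {x : Fin d → ℝ | ∀ i, 0 ≤ x i} := by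
    rw [Set.setOf_forall]
    exact isClosed_iInter fun i => isClosed_le continuous_const (continuous_apply i)
  have h2 : IsClosed {x : Fin d → ℝ | ∑ i, x i ≤ 1} :=
    isClosed_le (continuous_finset_sum _ fun i _ => continuous_apply i) continuous_const
  exact h1.inter h2

lemma isClosed_Theta : IsClosed (Theta c) := by
  have h1 : IsClosed {θ : Param c | ∀ i, θ.1 i ∈ Sset c} := by
    rw [Set.setOf_forall]
    refine isClosed_iInter fun i => ?_
    have hcont : Continuous fun θ : Param c => θ.1 i :=
      (continuous_apply i).comp continuous_fst
    exact (isClosed_Sset c).preimage hcont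
  have h2 : IsClosed {θ : Param c | θ.2 ∈ Sset c} :=
    (isClosed_Sset c).preimage continuous_snd
  exact h1.inter h2

lemma continuous_l1dist (θ0 : Param c) : Continuous (fun θ : Param c => l1dist θ θ0) := by
  apply Continuous.add
  · apply continuous_finset_sum
    intro i _
    apply continuous_finset_sum
    intro j _
    have hcont : Continuous fun θ : Param c => θ.1 i j :=
      (continuous_apply j).comp ((continuous_apply i).comp continuous_fst)
    exact (hcont.sub continuous_const).abs
  · apply continuous_finset_sum
    intro i _
    have hcont : Continuous fun θ : Param c => θ.2 i :=
      (continuous_apply i).comp continuous_snd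
    exact (hcont.sub continuous_const).abs

lemma isCompact_K (θ0 : Param c) (ε : ℝ) :
    IsCompact {θ : Param c | θ ∈ Theta c ∧ ε ≤ l1dist θ θ0} := by
  apply Metric.isCompact_of_isClosed_isBounded
  · have h2 : IsClosed {θ : Param c | ε ≤ l1dist θ θ0} :=
      isClosed_le continuous_const (continuous_l1dist θ0)
    exact isClosed_Theta.inter h2
  · apply Bornology.IsBounded.subset (Metric.isBounded_closedBall (x := (0 : Param c)) (r := 1))
    rintro θ ⟨hθ, -⟩
    rw [Metric.mem_closedBall, Prod.dist_eq]
    apply max_le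
    · rw [dist_pi_le_iff zero_le_one]
      intro i
      rw [dist_pi_le_iff zero_le_one]
      intro j
      have h0 : (0 : Param c).1 i j = 0 := rfl
      rw [Real.dist_eq, h0, sub_zero, abs_of_nonneg ((hθ.1 i).1 j)]
      calc θ.1 i j ≤ ∑ k, θ.1 i k := Finset.single_le_sum (fun k _ => (hθ.1 i).1 k)
            (Finset.mem_univ j)
      _ ≤ 1 := (hθ.1 i).2
    · rw [dist_pi_le_iff zero_le_one]
      intro i
      have h0 : (0 : Param c).2 i = 0 := rfl
      rw [Real.dist_eq, h0, sub_zero, abs_of_nonneg (hθ.2.1 i)]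
      calc θ.2 i ≤ ∑ k, θ.2 k := Finset.single_le_sum (fun k _ => hθ.2.1 k)
            (Finset.mem_univ i)
      _ ≤ 1 := hθ.2.2

end Geometry

section FNge

lemma fN_ge {c : ℕ} (N n : ℕ) (hN : 1 ≤ N)
    (aU aL bL : ℕ → Fin (c+1) → ℝ)
    (haU : ∀ r, aU r ∈ simplex (c+1)) (haL : ∀ r, aL r ∈ simplex (c+1))
    (hbL : ∀ r, bL r ∈ simplex (c+1))
    (θ x : Param c) (hθ : θ ∈ Theta c) (hx : x ∈ Theta c)
    {ρ : ℝ} (hρ : 0 < ρ)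
    (hdist : dist θ x ≤ ρ / (((c:ℝ)+2)*((c:ℝ)+1))) :
    ENNReal.ofReal
      ((∑ r ∈ Finset.range N, psiU (c+1) (mtv (completeM x.1) (completeV x.2)) ρ (aU r)
        + ∑ r ∈ Finset.range n, psiU (c+1) (mtv (completeM x.1) (bL r)) ρ (aL r)) / N)
      ≤ fN N n aU aL bL θ := by
  set δ : ℝ := ρ / (((c:ℝ)+2)*((c:ℝ)+1)) with hδdef
  have hδ0 : 0 ≤ δ := by positivity
  obtain ⟨h1, h2⟩ := dist_coords θ x hdist
  have hM_close : ∀ i j, |completeM θ.1 i j - completeM x.1 i j| ≤ c * δ :=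
    completeM_close hδ0 h1
  have hV_close : ∀ i, |completeV θ.2 i - completeV x.2 i| ≤ c * δ :=
    completeV_close hδ0 h2
  have hcδρ : ((c:ℝ)+2) * ((c:ℝ) * δ) ≤ ρ := by
    have h3 : ((c:ℝ)+2) * ((c:ℝ) * (ρ / (((c:ℝ)+2)*((c:ℝ)+1)))) = ρ * ((c:ℝ)/((c:ℝ)+1)) := by
      field_simp
    rw [hδdef, h3]
    have h4 : (c:ℝ)/((c:ℝ)+1) ≤ 1 := by
      rw [div_le_one (by positivity)]; linarith
    nlinarith [hρ.le]
  have hcδρ' : (c:ℝ) * δ ≤ ρ := by nlinarith [mul_nonneg (Nat.cast_nonneg (α := ℝ) c) hδ0]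
  have hq_le : ∀ j, mtv (completeM θ.1) (completeV θ.2) j
      ≤ mtv (completeM x.1) (completeV x.2) j + ρ := by
    intro j
    have := q_close hθ hx (by positivity : (0:ℝ) ≤ (c:ℝ)*δ) hM_close hV_close j
    have h5 := abs_le.mp this
    linarith [h5.2, hcδρ]
  have hqb_le : ∀ r j, mtv (completeM θ.1) (bL r) j ≤ mtv (completeM x.1) (bL r) j + ρ := by
    intro r j
    have := mtv_close (hbL r) hM_close j
    have h5 := abs_le.mp this
    linarith [h5.2, hcδρ']
  have hqθ_nonneg : ∀ j, 0 ≤ mtv (completeM θ.1) (completeV θ.2) j :=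
    (mtv_mem_simplex (completeM_row_mem_simplex hθ.1) (completeV_mem_simplex hθ.2)).1
  have hqbθ_nonneg : ∀ r j, 0 ≤ mtv (completeM θ.1) (bL r) j := fun r =>
    (mtv_mem_simplex (completeM_row_mem_simplex hθ.1) (hbL r)).1
  have hvU_nonneg : ∀ j, 0 ≤ mtv (completeM x.1) (completeV x.2) j :=
    (mtv_mem_simplex (completeM_row_mem_simplex hx.1) (completeV_mem_simplex hx.2)).1
  have hvL_nonneg : ∀ r j, 0 ≤ mtv (completeM x.1) (bL r) j := fun r =>
    (mtv_mem_simplex (completeM_row_mem_simplex hx.1) (hbL r)).1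
  have hU : ∀ r, ENNReal.ofReal (psiU (c+1) (mtv (completeM x.1) (completeV x.2)) ρ (aU r))
      ≤ klDiv (aU r) (mtv (completeM θ.1) (completeV θ.2)) := fun r =>
    ofReal_psiU_le_klDiv _ _ _ (haU r) hρ hqθ_nonneg hq_le hvU_nonneg
  have hL : ∀ r, ENNReal.ofReal (psiU (c+1) (mtv (completeM x.1) (bL r)) ρ (aL r))
      ≤ klDiv (aL r) (mtv (completeM θ.1) (bL r)) := fun r =>
    ofReal_psiU_le_klDiv _ _ _ (haL r) hρ (hqbθ_nonneg r) (hqb_le r) (hvL_nonneg r)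
  have hsum1 : ENNReal.ofReal (∑ r ∈ Finset.range N,
      psiU (c+1) (mtv (completeM x.1) (completeV x.2)) ρ (aU r))
      ≤ ∑ r ∈ Finset.range N, klDiv (aU r) (mtv (completeM θ.1) (completeV θ.2)) :=
    le_trans (ofReal_sum_le _ _) (Finset.sum_le_sum fun r _ => hU r)
  have hsum2 : ENNReal.ofReal (∑ r ∈ Finset.range n,
      psiU (c+1) (mtv (completeM x.1) (bL r)) ρ (aL r))
      ≤ ∑ r ∈ Finset.range n, klDiv (aL r) (mtv (completeM θ.1) (bL r)) :=
    le_trans (ofReal_sum_le _ _) (Finset.sum_le_sum fun r _ => hL r)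
  unfold fN
  have hNpos : (0:ℝ) < N := by exact_mod_cast hN
  rw [ENNReal.ofReal_div_of_pos hNpos, ENNReal.ofReal_natCast]
  apply ENNReal.div_le_div_right
  exact le_trans ENNReal.ofReal_add_le (add_le_add hsum1 hsum2)

end FNge


set_option maxHeartbeats 2000000 in
/-- identifiability, almost-sure version: for every ε > 0 there is κ > 0 such
that almost surely liminf_N inf_{θ ∈ Θ, ‖θ−θ⁰‖₁ > ε} f_N(θ) ≥ f(θ⁰) + κ. -/
theorem stmt9
    {Ωs : Type*} [MeasurableSpace Ωs] (μ : Measure Ωs) [IsProbabilityMeasure μ]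
    (c : ℕ) (hc : 1 ≤ c)
    (aU aL bL : ℕ → Ωs → Fin (c+1) → ℝ)
    (haU_meas : ∀ r, Measurable (aU r)) (haL_meas : ∀ r, Measurable (aL r))
    (hbL_meas : ∀ r, Measurable (bL r))
    (haU_simplex : ∀ r ω, aU r ω ∈ simplex (c+1))
    (haL_simplex : ∀ r ω, aL r ω ∈ simplex (c+1))
    (hbL_simplex : ∀ r ω, bL r ω ∈ simplex (c+1))
    (haU_indep : iIndepFun aU μ)
    (haU_ident : ∀ r, IdentDistrib (aU r) (aU 0) μ μ)
    (hL_indep : iIndepFun (fun r ω => (aL r ω, bL r ω)) μ)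
    (hL_ident : ∀ r,
      IdentDistrib (fun ω => (aL r ω, bL r ω)) (fun ω => (aL 0 ω, bL 0 ω)) μ μ)
    (hUL_indep : IndepFun (fun ω r => aU r ω) (fun ω r => (aL r ω, bL r ω)) μ)
    (M0 : Fin (c+1) → Fin (c+1) → ℝ) (p0 : Fin (c+1) → ℝ)
    (hM0 : rowStochastic M0) (hp0 : p0 ∈ simplex (c+1))
    (hM0pos : ∀ i j, 0 < M0 i j) (hp0pos : ∀ i, 0 < p0 i)
    (hM0det : (Matrix.of M0).det ≠ 0)
    (hmeanU : ∀ r j, ∫ ω, aU r ω j ∂μ = mtv M0 p0 j)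
    (hcondL : ∀ r j, μ[(fun ω => aL r ω j) | MeasurableSpace.comap (bL r) inferInstance]
      =ᵐ[μ] fun ω => mtv M0 (bL r ω) j)
    (hposb : ∀ (r : ℕ) (i : Fin (c+1)), ∀ ε > (0 : ℝ), 0 < μ {ω | 1 - ε ≤ bL r ω i})
    (ξ : ℝ) (hξ0 : 0 < ξ) (hξ1 : ξ ≤ 1)
    (n : ℕ → ℕ) (hn : ∀ N, (n N : ℝ) = ξ * N)
    :
    ∀ ε > (0 : ℝ), ∃ κ > (0 : ℝ), ∀ᵐ ω ∂μ,
      (∫⁻ ω', klDiv (aU 0 ω') (mtv M0 p0) ∂μ) +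
          ENNReal.ofReal ξ * (∫⁻ ω', klDiv (aL 0 ω') (mtv M0 (bL 0 ω')) ∂μ) +
          ENNReal.ofReal κ ≤
        Filter.atTop.liminf (fun N =>
          ⨅ θ ∈ {θ : Param c | θ ∈ Theta c ∧ ε < l1dist θ (truncM M0, truncV p0)},
            fN N (n N) (fun r => aU r ω) (fun r => aL r ω) (fun r => bL r ω) θ) := by
  classical
  intro ε hε
  set θ0 : Param c := (truncM M0, truncV p0) with hθ0def
  set S : Set (Param c) := {θ : Param c | θ ∈ Theta c ∧ ε < l1dist θ θ0} with hSdef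
  set K : Set (Param c) := {θ : Param c | θ ∈ Theta c ∧ ε ≤ l1dist θ θ0} with hKdef
  have hSK : S ⊆ K := fun θ hθ => ⟨hθ.1, le_of_lt hθ.2⟩
  -- minimum entry of M0
  obtain ⟨⟨i0, j0⟩, -, hmin⟩ := Finset.exists_min_image
    (Finset.univ : Finset (Fin (c+1) × Fin (c+1))) (fun p => M0 p.1 p.2) ⟨(0,0), Finset.mem_univ _⟩
  set m : ℝ := M0 i0 j0 with hmdef
  have hm0 : 0 < m := hM0pos i0 j0
  have hmle : ∀ i j, m ≤ M0 i j := fun i j => hmin (i, j) (Finset.mem_univ _)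
  have hM0rows : ∀ i, M0 i ∈ simplex (c+1) := fun i => ⟨hM0.1 i, hM0.2 i⟩
  set q0 : Fin (c+1) → ℝ := mtv M0 p0 with hq0def
  have hq0_simplex : q0 ∈ simplex (c+1) := mtv_mem_simplex hM0rows hp0
  have hq0m : ∀ j, m ≤ q0 j := fun j => mtv_ge hmle hp0 j
  have hq0pos : ∀ j, 0 < q0 j := fun j => lt_of_lt_of_le hm0 (hq0m j)
  have hq0le1 : ∀ j, q0 j ≤ 1 := fun j => simplex_le_one hq0_simplex j
  have hpb_simplex : ∀ ω, mtv M0 (bL 0 ω) ∈ simplex (c+1) :=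
    fun ω => mtv_mem_simplex hM0rows (hbL_simplex 0 ω)
  have hpbm : ∀ ω j, m ≤ mtv M0 (bL 0 ω) j := fun ω j => mtv_ge hmle (hbL_simplex 0 ω) j
  -- base quantities
  have hklU_meas : Measurable (fun ω => klReal (aU 0 ω) q0) :=
    (measurable_klReal_fst q0).comp (haU_meas 0)
  have hklU_bd : ∀ ω, |klReal (aU 0 ω) q0| ≤ ((c+1 : ℕ) : ℝ) * (1 + |Real.log m|) :=
    fun ω => klReal_abs_bound _ _ (haU_simplex 0 ω) hm0 hq0m hq0le1
  have hklU_int : Integrable (fun ω => klReal (aU 0 ω) q0) μ :=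
    Integrable.mono' (integrable_const _) hklU_meas.aestronglyMeasurable
      (Filter.Eventually.of_forall fun ω => by rw [Real.norm_eq_abs]; exact hklU_bd ω)
  have hklU_nonneg : ∀ ω, 0 ≤ klReal (aU 0 ω) q0 :=
    fun ω => klReal_nonneg _ _ (haU_simplex 0 ω) hq0pos (le_of_eq hq0_simplex.2)
  set baseU : ℝ := ∫ ω, klReal (aU 0 ω) q0 ∂μ with hbaseUdef
  have hbaseU_nonneg : 0 ≤ baseU := integral_nonneg hklU_nonneg
  have hklL_meas : Measurable (fun ω => klReal (aL 0 ω) (mtv M0 (bL 0 ω))) :=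
    (measurable_klReal_pair M0).comp ((haL_meas 0).prodMk (hbL_meas 0))
  have hklL_bd : ∀ ω, |klReal (aL 0 ω) (mtv M0 (bL 0 ω))| ≤ ((c+1 : ℕ) : ℝ) * (1 + |Real.log m|) :=
    fun ω => klReal_abs_bound _ _ (haL_simplex 0 ω) hm0 (hpbm ω)
      (fun j => simplex_le_one (hpb_simplex ω) j)
  have hklL_int : Integrable (fun ω => klReal (aL 0 ω) (mtv M0 (bL 0 ω))) μ :=
    Integrable.mono' (integrable_const _) hklL_meas.aestronglyMeasurable
      (Filter.Eventually.of_forall fun ω => by rw [Real.norm_eq_abs]; exact hklL_bd ω)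
  have hklL_nonneg : ∀ ω, 0 ≤ klReal (aL 0 ω) (mtv M0 (bL 0 ω)) :=
    fun ω => klReal_nonneg _ _ (haL_simplex 0 ω)
      (fun j => lt_of_lt_of_le hm0 (hpbm ω j)) (le_of_eq (hpb_simplex ω).2)
  set baseL : ℝ := ∫ ω, klReal (aL 0 ω) (mtv M0 (bL 0 ω)) ∂μ with hbaseLdef
  have hbaseL_nonneg : 0 ≤ baseL := integral_nonneg hklL_nonneg
  -- LHS identification
  have hLHSU : ∫⁻ ω', klDiv (aU 0 ω') q0 ∂μ = ENNReal.ofReal baseU := by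
    have h1 : ∀ ω, klDiv (aU 0 ω) q0 = ENNReal.ofReal (klReal (aU 0 ω) q0) :=
      fun ω => klDiv_eq_ofReal _ _ hq0pos
    rw [lintegral_congr h1,
      ← ofReal_integral_eq_lintegral_ofReal hklU_int (Filter.Eventually.of_forall hklU_nonneg)]
  have hLHSL : ∫⁻ ω', klDiv (aL 0 ω') (mtv M0 (bL 0 ω')) ∂μ = ENNReal.ofReal baseL := by
    have h1 : ∀ ω, klDiv (aL 0 ω) (mtv M0 (bL 0 ω))
        = ENNReal.ofReal (klReal (aL 0 ω) (mtv M0 (bL 0 ω))) :=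
      fun ω => klDiv_eq_ofReal _ _ (fun j => lt_of_lt_of_le hm0 (hpbm ω j))
    rw [lintegral_congr h1,
      ← ofReal_integral_eq_lintegral_ofReal hklL_int (Filter.Eventually.of_forall hklL_nonneg)]
  by_cases hKne : K.Nonempty
  swap
  · refine ⟨1, one_pos, ?_⟩
    apply Filter.Eventually.of_forall
    intro ω
    have hSempty : S = ∅ := by
      rw [Set.eq_empty_iff_forall_notMem]
      intro θ hθ
      exact hKne ⟨θ, hSK hθ⟩
    have hinf : (fun N : ℕ => ⨅ θ ∈ S, fN N (n N) (fun r => aU r ω) (fun r => aL r ω)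
        (fun r => bL r ω) θ) = fun _ => (⊤ : ℝ≥0∞) := by
      funext N
      rw [hSempty]
      simp
    rw [hinf, Filter.liminf_const]
    exact le_top
  -- main case
  have hchoice : ∀ x : K, ∃ ρ : ℝ, 0 < ρ ∧ ρ ≤ 1 ∧
      0 < (∑ j, q0 j * Real.log (q0 j /
            (mtv (completeM (x:Param c).1) (completeV (x:Param c).2) j + ρ)))
        + ξ * ∫ ω, (∑ j, mtv M0 (bL 0 ω) j * Real.log (mtv M0 (bL 0 ω) j /
            (mtv (completeM (x:Param c).1) (bL 0 ω) j + ρ))) ∂μ := by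
    intro x
    have hxK := x.2
    have hxne : (x : Param c) ≠ θ0 := by
      intro heq
      have h0 : l1dist (x : Param c) θ0 = 0 := by rw [heq]; simp [l1dist]
      have := hxK.2
      rw [h0] at this
      linarith
    exact identifiability μ (bL 0) (hbL_meas 0) (hbL_simplex 0) M0 p0 hM0 hp0 hM0pos
      hM0det (fun i ε' hε' => hposb 0 i ε' hε') ξ hξ0 (x : Param c) hxK.1 hxne
  choose ρf hρf0 hρf1 hGpos using hchoice
  -- covering
  have hKcomp : IsCompact K := isCompact_K θ0 ε
  have hδf : ∀ x : K, 0 < ρf x / (((c:ℝ)+2)*((c:ℝ)+1)) :=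
    fun x => div_pos (hρf0 x) (by positivity)
  obtain ⟨t, ht⟩ := hKcomp.elim_finite_subcover
    (fun x : K => Metric.ball (x : Param c) (ρf x / (((c:ℝ)+2)*((c:ℝ)+1))))
    (fun x => Metric.isOpen_ball)
    (fun θ hθ => Set.mem_iUnion.mpr ⟨⟨θ, hθ⟩, Metric.mem_ball_self (hδf ⟨θ, hθ⟩)⟩)
  have htne : t.Nonempty := by
    obtain ⟨y, hy⟩ := hKne
    have h := ht hy
    rw [Set.mem_iUnion₂] at h
    obtain ⟨x, hx, -⟩ := h
    exact ⟨x, hx⟩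
  set Gv : K → ℝ := fun x => (∑ j, q0 j * Real.log (q0 j /
        (mtv (completeM (x:Param c).1) (completeV (x:Param c).2) j + ρf x)))
      + ξ * ∫ ω, (∑ j, mtv M0 (bL 0 ω) j * Real.log (mtv M0 (bL 0 ω) j /
        (mtv (completeM (x:Param c).1) (bL 0 ω) j + ρf x))) ∂μ with hGvdef
  set γ : ℝ := t.inf' htne Gv with hγdef
  have hγ0 : 0 < γ := by
    rw [hγdef, Finset.lt_inf'_iff]
    exact fun x _ => hGpos x
  refine ⟨γ/3, by positivity, ?_⟩
  -- simplex facts for the reference vectors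
  have hvx_simplex : ∀ x : K, mtv (completeM (x:Param c).1) (completeV (x:Param c).2)
      ∈ simplex (c+1) := fun x => mtv_mem_simplex
        (completeM_row_mem_simplex x.2.1.1) (completeV_mem_simplex x.2.1.2)
  have hqx_simplex : ∀ (x : K) ω, mtv (completeM (x:Param c).1) (bL 0 ω) ∈ simplex (c+1) :=
    fun x ω => mtv_mem_simplex (completeM_row_mem_simplex x.2.1.1) (hbL_simplex 0 ω)
  -- SLLN, unlabeled
  have hψU_meas : ∀ x : K, Measurable
      (psiU (c+1) (mtv (completeM (x:Param c).1) (completeV (x:Param c).2)) (ρf x)) :=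
    fun x => measurable_psiU _ _
  have hsllnU : ∀ x : K, ∀ᵐ ω ∂μ, Filter.Tendsto
      (fun N : ℕ => (∑ r ∈ Finset.range N, psiU (c+1)
        (mtv (completeM (x:Param c).1) (completeV (x:Param c).2)) (ρf x) (aU r ω)) / N)
      Filter.atTop
      (nhds (∫ ω', psiU (c+1) (mtv (completeM (x:Param c).1) (completeV (x:Param c).2))
        (ρf x) (aU 0 ω') ∂μ)) := by
    intro x
    apply slln_bounded μ _
      (fun r => ((hψU_meas x).comp (haU_meas r)).aestronglyMeasurable)
      (((c:ℝ)+1) * (2 + |Real.log (ρf x)|))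
    · intro r ω
      have := psiU_abs_bound (mtv (completeM (x:Param c).1) (completeV (x:Param c).2))
        (hρf0 x) (hρf1 x) (aU r ω) (haU_simplex r ω) (hvx_simplex x).1
        (fun j => simplex_le_one (hvx_simplex x) j)
      simpa using this
    · intro r s hrs
      exact (haU_indep.indepFun hrs).comp (hψU_meas x) (hψU_meas x)
    · intro r
      exact (haU_ident r).comp (hψU_meas x)
  -- SLLN, labeled
  have hψL_meas : ∀ x : K, Measurable
      (fun pr : (Fin (c+1) → ℝ) × (Fin (c+1) → ℝ) =>
        psiU (c+1) (mtv (completeM (x:Param c).1) pr.2) (ρf x) pr.1) :=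
    fun x => measurable_psiL _ _
  have hsllnL : ∀ x : K, ∀ᵐ ω ∂μ, Filter.Tendsto
      (fun k : ℕ => (∑ r ∈ Finset.range k, psiU (c+1)
        (mtv (completeM (x:Param c).1) (bL r ω)) (ρf x) (aL r ω)) / k)
      Filter.atTop
      (nhds (∫ ω', psiU (c+1) (mtv (completeM (x:Param c).1) (bL 0 ω'))
        (ρf x) (aL 0 ω') ∂μ)) := by
    intro x
    apply slln_bounded μ (fun r ω => psiU (c+1)
        (mtv (completeM (x:Param c).1) (bL r ω)) (ρf x) (aL r ω))
      (fun r => ((hψL_meas x).comp ((haL_meas r).prodMk (hbL_meas r))).aestronglyMeasurable)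
      (((c:ℝ)+1) * (2 + |Real.log (ρf x)|))
    · intro r ω
      have hsim : mtv (completeM (x:Param c).1) (bL r ω) ∈ simplex (c+1) :=
        mtv_mem_simplex (completeM_row_mem_simplex x.2.1.1) (hbL_simplex r ω)
      have := psiU_abs_bound (mtv (completeM (x:Param c).1) (bL r ω))
        (hρf0 x) (hρf1 x) (aL r ω) (haL_simplex r ω) hsim.1
        (fun j => simplex_le_one hsim j)
      simpa using this
    · intro r s hrs
      exact (hL_indep.indepFun hrs).comp (hψL_meas x) (hψL_meas x)
    · intro r
      exact (hL_ident r).comp (hψL_meas x)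
  -- expectation identities
  have hEU : ∀ x : K, ∫ ω', psiU (c+1)
      (mtv (completeM (x:Param c).1) (completeV (x:Param c).2)) (ρf x) (aU 0 ω') ∂μ
      = baseU + ∑ j, q0 j * Real.log (q0 j /
          (mtv (completeM (x:Param c).1) (completeV (x:Param c).2) j + ρf x)) := by
    intro x
    have hvρ : ∀ j, 0 < mtv (completeM (x:Param c).1) (completeV (x:Param c).2) j + ρf x :=
      fun j => by linarith [(hvx_simplex x).1 j, hρf0 x]
    have hpt : ∀ ω', psiU (c+1) (mtv (completeM (x:Param c).1) (completeV (x:Param c).2))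
        (ρf x) (aU 0 ω')
        = klReal (aU 0 ω') q0 + ∑ j, aU 0 ω' j * (Real.log (q0 j)
          - Real.log (mtv (completeM (x:Param c).1) (completeV (x:Param c).2) j + ρf x)) :=
      fun ω' => psiU_decomp _ q0 (ρf x) hq0pos _
    have hintj : ∀ j : Fin (c+1), Integrable (fun ω' => aU 0 ω' j * (Real.log (q0 j)
        - Real.log (mtv (completeM (x:Param c).1) (completeV (x:Param c).2) j + ρf x))) μ := by
      intro j
      apply Integrable.mono' (integrable_const (|Real.log (q0 j)
        - Real.log (mtv (completeM (x:Param c).1) (completeV (x:Param c).2) j + ρf x)|))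
      · exact (((measurable_pi_apply j).comp (haU_meas 0)).mul_const _).aestronglyMeasurable
      · apply Filter.Eventually.of_forall
        intro ω'
        rw [Real.norm_eq_abs, abs_mul]
        have h1 : |aU 0 ω' j| ≤ 1 := by
          rw [abs_of_nonneg ((haU_simplex 0 ω').1 j)]
          exact simplex_le_one (haU_simplex 0 ω') j
        nlinarith [abs_nonneg (Real.log (q0 j) - Real.log
          (mtv (completeM (x:Param c).1) (completeV (x:Param c).2) j + ρf x)),
          abs_nonneg (aU 0 ω' j)]
    rw [integral_congr_ae (Filter.Eventually.of_forall hpt),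
      integral_add hklU_int (integrable_finset_sum _ fun j _ => hintj j),
      integral_finset_sum _ fun j _ => hintj j]
    congr 1
    refine Finset.sum_congr rfl fun j _ => ?_
    rw [integral_mul_const, hmeanU 0 j, Real.log_div (hq0pos j).ne' (hvρ j).ne']
  have hEL : ∀ x : K, ∫ ω', psiU (c+1) (mtv (completeM (x:Param c).1) (bL 0 ω'))
      (ρf x) (aL 0 ω') ∂μ
      = baseL + ∫ ω, (∑ j, mtv M0 (bL 0 ω) j * Real.log (mtv M0 (bL 0 ω) j /
          (mtv (completeM (x:Param c).1) (bL 0 ω) j + ρf x))) ∂μ := by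
    intro x
    have hqxρ : ∀ ω j, 0 < mtv (completeM (x:Param c).1) (bL 0 ω) j + ρf x :=
      fun ω j => by linarith [(hqx_simplex x ω).1 j, hρf0 x]
    have hH_meas : ∀ j : Fin (c+1), Measurable (fun y : Fin (c+1) → ℝ =>
        Real.log (mtv M0 y j) - Real.log (mtv (completeM (x:Param c).1) y j + ρf x)) :=
      fun j => (Real.measurable_log.comp (measurable_mtv_snd M0 j)).sub
        (Real.measurable_log.comp ((measurable_mtv_snd (completeM (x:Param c).1) j).add_const
          (ρf x)))
    have hH_bd : ∀ (j : Fin (c+1)) ω, |Real.log (mtv M0 (bL 0 ω) j)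
        - Real.log (mtv (completeM (x:Param c).1) (bL 0 ω) j + ρf x)|
        ≤ |Real.log m| + (|Real.log (ρf x)| + 1) := by
      intro j ω
      have hp1 : 0 < mtv M0 (bL 0 ω) j := lt_of_lt_of_le hm0 (hpbm ω j)
      have hp2 : mtv M0 (bL 0 ω) j ≤ 1 := simplex_le_one (hpb_simplex ω) j
      have h1 : |Real.log (mtv M0 (bL 0 ω) j)| ≤ |Real.log m| := by
        have hl1 : Real.log (mtv M0 (bL 0 ω) j) ≤ 0 := Real.log_nonpos hp1.le hp2
        have hl2 : Real.log m ≤ Real.log (mtv M0 (bL 0 ω) j) :=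
          Real.log_le_log hm0 (hpbm ω j)
        rw [abs_of_nonpos hl1]
        calc -Real.log (mtv M0 (bL 0 ω) j) ≤ -Real.log m := by linarith
        _ ≤ |Real.log m| := neg_le_abs _
      have h2 : |Real.log (mtv (completeM (x:Param c).1) (bL 0 ω) j + ρf x)|
          ≤ |Real.log (ρf x)| + 1 :=
        abs_log_le (hρf0 x) (by linarith [(hqx_simplex x ω).1 j])
          (by linarith [simplex_le_one (hqx_simplex x ω) j, hρf1 x])
      calc _ ≤ |Real.log (mtv M0 (bL 0 ω) j)|
          + |Real.log (mtv (completeM (x:Param c).1) (bL 0 ω) j + ρf x)| := abs_sub _ _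
      _ ≤ _ := add_le_add h1 h2
    have hpt : ∀ ω', psiU (c+1) (mtv (completeM (x:Param c).1) (bL 0 ω')) (ρf x) (aL 0 ω')
        = klReal (aL 0 ω') (mtv M0 (bL 0 ω')) + ∑ j, aL 0 ω' j *
          (Real.log (mtv M0 (bL 0 ω') j)
            - Real.log (mtv (completeM (x:Param c).1) (bL 0 ω') j + ρf x)) :=
      fun ω' => psiU_decomp _ (mtv M0 (bL 0 ω')) (ρf x)
        (fun j => lt_of_lt_of_le hm0 (hpbm ω' j)) _
    have hint2 : ∀ j : Fin (c+1), Integrable (fun ω' => aL 0 ω' j *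
        (Real.log (mtv M0 (bL 0 ω') j)
          - Real.log (mtv (completeM (x:Param c).1) (bL 0 ω') j + ρf x))) μ := by
      intro j
      apply Integrable.mono' (integrable_const (|Real.log m| + (|Real.log (ρf x)| + 1)))
      · exact (((measurable_pi_apply j).comp (haL_meas 0)).mul
          ((hH_meas j).comp (hbL_meas 0))).aestronglyMeasurable
      · apply Filter.Eventually.of_forall
        intro ω'
        rw [Real.norm_eq_abs, abs_mul]
        have h1 : |aL 0 ω' j| ≤ 1 := by
          rw [abs_of_nonneg ((haL_simplex 0 ω').1 j)]
          exact simplex_le_one (haL_simplex 0 ω') j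
        have h2 := hH_bd j ω'
        nlinarith [abs_nonneg (aL 0 ω' j), abs_nonneg (Real.log (mtv M0 (bL 0 ω') j)
          - Real.log (mtv (completeM (x:Param c).1) (bL 0 ω') j + ρf x))]
    have hint3 : ∀ j : Fin (c+1), Integrable (fun ω' =>
        (Real.log (mtv M0 (bL 0 ω') j)
          - Real.log (mtv (completeM (x:Param c).1) (bL 0 ω') j + ρf x))
        * mtv M0 (bL 0 ω') j) μ := by
      intro j
      apply Integrable.mono' (integrable_const ((|Real.log m| + (|Real.log (ρf x)| + 1))))
      · exact (((hH_meas j).comp (hbL_meas 0)).mul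
          ((measurable_mtv_snd M0 j).comp (hbL_meas 0))).aestronglyMeasurable
      · apply Filter.Eventually.of_forall
        intro ω'
        rw [Real.norm_eq_abs, abs_mul]
        have h1 : |mtv M0 (bL 0 ω') j| ≤ 1 := by
          rw [abs_of_nonneg ((hpb_simplex ω').1 j)]
          exact simplex_le_one (hpb_simplex ω') j
        have h2 := hH_bd j ω'
        nlinarith [abs_nonneg (mtv M0 (bL 0 ω') j), abs_nonneg (Real.log (mtv M0 (bL 0 ω') j)
          - Real.log (mtv (completeM (x:Param c).1) (bL 0 ω') j + ρf x))]
    calc ∫ ω', psiU (c+1) (mtv (completeM (x:Param c).1) (bL 0 ω')) (ρf x) (aL 0 ω') ∂μ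
        = ∫ ω', (klReal (aL 0 ω') (mtv M0 (bL 0 ω')) + ∑ j, aL 0 ω' j *
            (Real.log (mtv M0 (bL 0 ω') j)
              - Real.log (mtv (completeM (x:Param c).1) (bL 0 ω') j + ρf x))) ∂μ :=
          integral_congr_ae (Filter.Eventually.of_forall hpt)
    _ = baseL + ∑ j, ∫ ω', aL 0 ω' j * (Real.log (mtv M0 (bL 0 ω') j)
          - Real.log (mtv (completeM (x:Param c).1) (bL 0 ω') j + ρf x)) ∂μ := by
        rw [integral_add hklL_int (integrable_finset_sum _ fun j _ => hint2 j),
          integral_finset_sum _ fun j _ => hint2 j]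
    _ = baseL + ∑ j, ∫ ω', (Real.log (mtv M0 (bL 0 ω') j)
          - Real.log (mtv (completeM (x:Param c).1) (bL 0 ω') j + ρf x))
          * mtv M0 (bL 0 ω') j ∂μ := by
        congr 1
        refine Finset.sum_congr rfl fun j _ => ?_
        have hmc : (fun ω' => aL 0 ω' j * (Real.log (mtv M0 (bL 0 ω') j)
            - Real.log (mtv (completeM (x:Param c).1) (bL 0 ω') j + ρf x)))
            = fun ω' => (Real.log (mtv M0 (bL 0 ω') j)
              - Real.log (mtv (completeM (x:Param c).1) (bL 0 ω') j + ρf x)) * aL 0 ω' j :=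
          funext fun ω' => mul_comm _ _
        rw [hmc]
        exact condexp_transfer μ (aL 0) (bL 0) (haL_meas 0) (hbL_meas 0) (haL_simplex 0)
          M0 j (hcondL 0 j) _ (hH_meas j) _ (hH_bd j)
    _ = baseL + ∫ ω, (∑ j, mtv M0 (bL 0 ω) j * Real.log (mtv M0 (bL 0 ω) j /
          (mtv (completeM (x:Param c).1) (bL 0 ω) j + ρf x))) ∂μ := by
        have hpteq : ∀ (j : Fin (c+1)) ω, (Real.log (mtv M0 (bL 0 ω) j)
            - Real.log (mtv (completeM (x:Param c).1) (bL 0 ω) j + ρf x))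
            * mtv M0 (bL 0 ω) j
            = mtv M0 (bL 0 ω) j * Real.log (mtv M0 (bL 0 ω) j /
              (mtv (completeM (x:Param c).1) (bL 0 ω) j + ρf x)) := by
          intro j ω
          rw [Real.log_div (lt_of_lt_of_le hm0 (hpbm ω j)).ne' (hqxρ ω j).ne']
          ring
        congr 1
        rw [integral_finset_sum (Finset.univ) (f := fun (j : Fin (c+1)) ω =>
          mtv M0 (bL 0 ω) j * Real.log (mtv M0 (bL 0 ω) j /
            (mtv (completeM (x:Param c).1) (bL 0 ω) j + ρf x)))
          (fun j _ => (hint3 j).congr (Filter.Eventually.of_forall fun ω => hpteq j ω))]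
        exact Finset.sum_congr rfl fun j _ =>
          integral_congr_ae (Filter.Eventually.of_forall fun ω => hpteq j ω)
  -- combine a.e. events over the finite cover
  have haecomb : ∀ᵐ ω ∂μ, ∀ x ∈ t,
      (Filter.Tendsto (fun N : ℕ => (∑ r ∈ Finset.range N, psiU (c+1)
          (mtv (completeM (x:Param c).1) (completeV (x:Param c).2)) (ρf x) (aU r ω)) / N)
        Filter.atTop
        (nhds (∫ ω', psiU (c+1) (mtv (completeM (x:Param c).1) (completeV (x:Param c).2))
          (ρf x) (aU 0 ω') ∂μ))
      ∧ Filter.Tendsto (fun k : ℕ => (∑ r ∈ Finset.range k, psiU (c+1)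
          (mtv (completeM (x:Param c).1) (bL r ω)) (ρf x) (aL r ω)) / k)
        Filter.atTop
        (nhds (∫ ω', psiU (c+1) (mtv (completeM (x:Param c).1) (bL 0 ω'))
          (ρf x) (aL 0 ω') ∂μ))) := by
    rw [Filter.eventually_all_finset]
    intro x _
    exact (hsllnU x).and (hsllnL x)
  filter_upwards [haecomb] with ω hω
  rw [hLHSU, hLHSL, ← ENNReal.ofReal_mul hξ0.le,
    ← ENNReal.ofReal_add hbaseU_nonneg (mul_nonneg hξ0.le hbaseL_nonneg),
    ← ENNReal.ofReal_add (by positivity) (by positivity : (0:ℝ) ≤ γ/3)]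
  have hn_tend : Filter.Tendsto n Filter.atTop Filter.atTop := by
    rw [← tendsto_natCast_atTop_iff (R := ℝ)]
    have he : (fun N : ℕ => ((n N : ℝ))) = fun N : ℕ => ξ * N := funext hn
    rw [he]
    exact Filter.Tendsto.const_mul_atTop hξ0 tendsto_natCast_atTop_atTop
  have hev : ∀ᶠ N : ℕ in Filter.atTop, ∀ x ∈ t,
      baseU + ξ * baseL + 2*γ/3 ≤
        (∑ r ∈ Finset.range N, psiU (c+1)
          (mtv (completeM (x:Param c).1) (completeV (x:Param c).2)) (ρf x) (aU r ω)) / N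
        + (∑ r ∈ Finset.range (n N), psiU (c+1)
          (mtv (completeM (x:Param c).1) (bL r ω)) (ρf x) (aL r ω)) / N := by
    rw [Filter.eventually_all_finset]
    intro x hx
    obtain ⟨hTU, hTL⟩ := hω x hx
    have hTL2 := hTL.comp hn_tend
    have hTL3 := hTL2.const_mul ξ
    have hTL4 : Filter.Tendsto (fun N : ℕ => (∑ r ∈ Finset.range (n N), psiU (c+1)
        (mtv (completeM (x:Param c).1) (bL r ω)) (ρf x) (aL r ω)) / N) Filter.atTop
        (nhds (ξ * ∫ ω', psiU (c+1) (mtv (completeM (x:Param c).1) (bL 0 ω'))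
          (ρf x) (aL 0 ω') ∂μ)) := by
      apply hTL3.congr'
      filter_upwards [Filter.eventually_ge_atTop 1] with N hN
      have hNpos : (0:ℝ) < N := by exact_mod_cast hN
      have hnN : (n N : ℝ) = ξ * N := hn N
      have hnNpos : (0:ℝ) < (n N : ℝ) := by rw [hnN]; positivity
      show ξ * ((∑ r ∈ Finset.range (n N), psiU (c+1)
        (mtv (completeM (x:Param c).1) (bL r ω)) (ρf x) (aL r ω)) / (n N))
        = (∑ r ∈ Finset.range (n N), psiU (c+1)
        (mtv (completeM (x:Param c).1) (bL r ω)) (ρf x) (aL r ω)) / N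
      rw [eq_div_iff hNpos.ne']
      field_simp
      rw [hnN]
      ring
    have hsum_tend := hTU.add hTL4
    rw [hEU x, hEL x] at hsum_tend
    have hGx : γ ≤ Gv x := Finset.inf'_le Gv hx
    apply hsum_tend.eventually (eventually_ge_nhds ?_)
    have hGveq : Gv x = (∑ j, q0 j * Real.log (q0 j /
        (mtv (completeM (x:Param c).1) (completeV (x:Param c).2) j + ρf x)))
      + ξ * ∫ ω, (∑ j, mtv M0 (bL 0 ω) j * Real.log (mtv M0 (bL 0 ω) j /
        (mtv (completeM (x:Param c).1) (bL 0 ω) j + ρf x))) ∂μ := rfl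
    rw [hGveq] at hGx
    have hexp : baseU + (∑ j, q0 j * Real.log (q0 j /
        (mtv (completeM (x:Param c).1) (completeV (x:Param c).2) j + ρf x)))
        + ξ * (baseL + ∫ ω, (∑ j, mtv M0 (bL 0 ω) j * Real.log (mtv M0 (bL 0 ω) j /
          (mtv (completeM (x:Param c).1) (bL 0 ω) j + ρf x))) ∂μ)
        = baseU + ξ * baseL + ((∑ j, q0 j * Real.log (q0 j /
          (mtv (completeM (x:Param c).1) (completeV (x:Param c).2) j + ρf x)))
          + ξ * ∫ ω, (∑ j, mtv M0 (bL 0 ω) j * Real.log (mtv M0 (bL 0 ω) j /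
          (mtv (completeM (x:Param c).1) (bL 0 ω) j + ρf x))) ∂μ) := by ring
    rw [hexp]
    linarith
  apply Filter.le_liminf_of_le (by isBoundedDefault)
  filter_upwards [hev, Filter.eventually_ge_atTop 1] with N hNx hN1
  refine le_iInf fun θ => le_iInf fun hθS => ?_
  have hθK : θ ∈ K := hSK hθS
  have hcov := ht hθK
  rw [Set.mem_iUnion₂] at hcov
  obtain ⟨x, hxt, hxball⟩ := hcov
  have hdistx : dist θ (x : Param c) ≤ ρf x / (((c:ℝ)+2)*((c:ℝ)+1)) :=
    le_of_lt (Metric.mem_ball.mp hxball)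
  refine le_trans ?_ (fN_ge N (n N) hN1 (fun r => aU r ω) (fun r => aL r ω)
    (fun r => bL r ω) (fun r => haU_simplex r ω) (fun r => haL_simplex r ω)
    (fun r => hbL_simplex r ω) θ (x : Param c) hθS.1 x.2.1 (hρf0 x) hdistx)
  apply ENNReal.ofReal_le_ofReal
  have hx2 := hNx x hxt
  rw [add_div]
  linarith



end GBQL
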